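/- arXiv:2312.01821 — 7 statements merged into one kernel-verified Lean document; each statement's English description precedes it below -/
import Mathlib

section
/- The Accola-Maclachlan group AM_g = ⟨a,b | a^{2g+2} = b^4 = (ab)^2 = [a,b^2] = 1⟩ has order 8g+8 for every g ≥ 2. -/
/-- The relators of the Accola–Maclachlan group
`AM_g = ⟨a, b | a^(2g+2) = b^4 = (ab)^2 = [a,b^2] = 1⟩`,
where `[x,y] = x⁻¹y⁻¹xy`, as elements of the free group on two generators
(`0` plays the role of `a`, `1` the role of `b`). -/
def amRels (g : ℕ) : Set (FreeGroup (Fin 2)) :=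
  { (FreeGroup.of 0) ^ (2 * g + 2),
    (FreeGroup.of 1) ^ 4,
    (FreeGroup.of 0 * FreeGroup.of 1) ^ 2,
    (FreeGroup.of 0)⁻¹ * ((FreeGroup.of 1) ^ 2)⁻¹ * FreeGroup.of 0 * (FreeGroup.of 1) ^ 2 }

namespace AMProof

instance (g : ℕ) : NeZero (2 * g + 2) := ⟨by omega⟩

/-- parity map on `ZMod 4` -/
def par4 : ZMod 4 →+* ZMod 2 := ZMod.castHom (show 2 ∣ 4 by norm_num) (ZMod 2)

/-- parity map on `ZMod (2g+2)` -/
def parn (g : ℕ) : ZMod (2 * g + 2) →+* ZMod 2 := ZMod.castHom (show 2 ∣ 2 * g + 2 by omega) (ZMod 2)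

/-- embedding `ZMod 2 → ZMod 4` doubling -/
def emb (x : ZMod 2) : ZMod 4 := 2 * x.val

/-- sign `(-1)^x` -/
def sgn (g : ℕ) (x : ZMod 2) : ZMod (2 * g + 2) := if x = 0 then 1 else -1

lemma two_cases : ∀ x : ZMod 2, x = 0 ∨ x = 1 := by decide

lemma sgn_zero (g : ℕ) : sgn g 0 = 1 := by simp [sgn]

lemma sgn_one (g : ℕ) : sgn g 1 = -1 := by
  simp [sgn, show (1 : ZMod 2) ≠ 0 by decide]

lemma sgn_add (g : ℕ) (x y : ZMod 2) : sgn g (x + y) = sgn g x * sgn g y := by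
  rcases two_cases x with rfl | rfl <;> rcases two_cases y with rfl | rfl <;>
    simp [sgn_zero, sgn_one, show (1 : ZMod 2) + 1 = 0 by decide]

lemma sgn_neg (g : ℕ) (x : ZMod 2) : sgn g (-x) = sgn g x := by
  rcases two_cases x with rfl | rfl <;> simp [show -(1 : ZMod 2) = 1 by decide]

lemma emb_add : ∀ x y : ZMod 2, emb (x + y) = emb x + emb y := by decide

lemma emb_zero : emb 0 = 0 := by decide

lemma emb_neg : ∀ x : ZMod 2, emb (-x) = emb x := by decide

lemma neg_emb : ∀ x : ZMod 2, -emb x = emb x := by decide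

lemma par4_emb : ∀ x : ZMod 2, par4 (emb x) = 0 := by decide

lemma parn_sgn (g : ℕ) (x : ZMod 2) : parn g (sgn g x) = 1 := by
  rcases two_cases x with rfl | rfl <;>
    simp [sgn_zero, sgn_one, map_neg, map_one, show -(1 : ZMod 2) = 1 by decide]

/-- The concrete model of the Accola–Maclachlan group. -/
@[ext] structure AM (g : ℕ) where
  i : ZMod (2 * g + 2)
  j : ZMod 4

variable {g : ℕ}

instance : Mul (AM g) :=
  ⟨fun p q => ⟨p.i + sgn g (par4 p.j) * q.i, p.j + q.j + emb (parn g q.i * par4 p.j)⟩⟩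

instance : One (AM g) := ⟨⟨0, 0⟩⟩

instance : Inv (AM g) :=
  ⟨fun p => ⟨-(sgn g (par4 p.j)) * p.i, -p.j - emb (parn g p.i * par4 p.j)⟩⟩

lemma mul_i (p q : AM g) : (p * q).i = p.i + sgn g (par4 p.j) * q.i := rfl
lemma mul_j (p q : AM g) : (p * q).j = p.j + q.j + emb (parn g q.i * par4 p.j) := rfl
lemma one_i : (1 : AM g).i = 0 := rfl
lemma one_j : (1 : AM g).j = 0 := rfl
lemma inv_i (p : AM g) : p⁻¹.i = -(sgn g (par4 p.j)) * p.i := rfl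
lemma inv_j (p : AM g) : p⁻¹.j = -p.j - emb (parn g p.i * par4 p.j) := rfl

instance : Group (AM g) where
  mul_assoc p q r := by
    ext
    · simp only [mul_i, mul_j, map_add, par4_emb, add_zero, sgn_add]
      ring
    · simp only [mul_i, mul_j, map_add, map_mul, par4_emb, add_zero, parn_sgn, one_mul,
        mul_add, add_mul, emb_add]
      abel
  one_mul p := by
    ext <;> simp [mul_i, mul_j, one_i, one_j, sgn_zero, emb_zero]
  mul_one p := by
    ext <;> simp [mul_i, mul_j, one_i, one_j, emb_zero]
  inv_mul_cancel p := by
    ext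
    · simp only [mul_i, inv_i, inv_j, one_i, map_sub, map_neg, par4_emb, sub_zero, sgn_neg]
      ring
    · simp only [mul_j, inv_i, inv_j, one_j, map_sub, map_neg, par4_emb, sub_zero, sgn_neg]
      rw [show parn g p.i * -par4 p.j = -(parn g p.i * par4 p.j) by ring, emb_neg]
      ring

/-- generator `a` in the model -/
def A (g : ℕ) : AM g := ⟨1, 0⟩
/-- generator `b` in the model -/
def B (g : ℕ) : AM g := ⟨0, 1⟩

lemma A_pow (a : ℕ) : (A g) ^ a = ⟨(a : ZMod (2 * g + 2)), 0⟩ := by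
  induction a with
  | zero => ext <;> simp [one_i, one_j]
  | succ a ih =>
      rw [pow_succ, ih]
      ext
      · simp [mul_i, A, sgn_zero]
      · simp [mul_j, A, emb_zero]

lemma B_pow (b : ℕ) : (B g) ^ b = ⟨0, (b : ZMod 4)⟩ := by
  induction b with
  | zero => ext <;> simp [one_i, one_j]
  | succ b ih =>
      rw [pow_succ, ih]
      ext
      · simp [mul_i, B]
      · simp [mul_j, B, emb_zero]

lemma A_pow_mul_B_pow (a b : ℕ) :
    (A g) ^ a * (B g) ^ b = ⟨(a : ZMod (2 * g + 2)), (b : ZMod 4)⟩ := by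
  rw [A_pow, B_pow]
  ext
  · simp [mul_i]
  · simp [mul_j, emb_zero]

/-- the equivalence with a product, for counting -/
def amEquiv (g : ℕ) : AM g ≃ ZMod (2 * g + 2) × ZMod 4 where
  toFun p := (p.i, p.j)
  invFun q := ⟨q.1, q.2⟩
  left_inv p := rfl
  right_inv q := rfl

lemma card_AM (g : ℕ) : Nat.card (AM g) = (2 * g + 2) * 4 := by
  rw [Nat.card_congr (amEquiv g), Nat.card_prod, Nat.card_zmod, Nat.card_zmod]

end AMProof

open AMProof in
/-- The Accola–Maclachlan group `AM_g` has order `8g + 8` for every `g ≥ 2`. -/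
theorem accola_maclachlan_group_card (g : ℕ) (hg : 2 ≤ g) :
    Nat.card (PresentedGroup (amRels g)) = 8 * g + 8 := by
  set P := PresentedGroup (amRels g)
  set x : P := PresentedGroup.of 0 with hxdef
  set y : P := PresentedGroup.of 1 with hydef
  -- the relations hold in P
  have hmk : ∀ r ∈ amRels g, PresentedGroup.mk (amRels g) r = 1 := fun r hr =>
    (QuotientGroup.eq_one_iff r).mpr (Subgroup.subset_normalClosure hr)
  have hx : x ^ (2 * g + 2) = 1 := by
    have := hmk _ (show (FreeGroup.of 0) ^ (2 * g + 2) ∈ amRels g by simp [amRels])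
    simp only [map_pow] at this; exact this
  have hy : y ^ 4 = 1 := by
    have := hmk _ (show (FreeGroup.of 1) ^ 4 ∈ amRels g by simp [amRels])
    simp only [map_pow] at this; exact this
  have h3 : (x * y) ^ 2 = 1 := by
    have := hmk _ (show (FreeGroup.of 0 * FreeGroup.of 1) ^ 2 ∈ amRels g by simp [amRels])
    simp only [map_pow, map_mul] at this; exact this
  have h4 : x⁻¹ * (y ^ 2)⁻¹ * x * y ^ 2 = 1 := by
    have := hmk _ (show (FreeGroup.of 0)⁻¹ * ((FreeGroup.of 1) ^ 2)⁻¹ * FreeGroup.of 0 *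
      (FreeGroup.of 1) ^ 2 ∈ amRels g by simp [amRels])
    simp only [map_pow, map_mul, map_inv] at this; exact this
  -- consequences
  have hc : x * y ^ 2 = y ^ 2 * x := by
    have := congrArg (fun t => y ^ 2 * x * t) h4
    simpa [mul_assoc] using this
  have h3' : x * y * (x * y) = 1 := by rw [← sq]; exact h3
  have hyx : y * x = x⁻¹ * y⁻¹ := by
    have := congrArg (fun t => x⁻¹ * t * y⁻¹) h3'
    simpa [mul_assoc] using this
  have xinv : x⁻¹ = x ^ (2 * g + 1) := by
    have h : x ^ (2 * g + 1) * x = 1 := by rw [← pow_succ, hx]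
    exact (eq_inv_of_mul_eq_one_left h).symm
  have yinv : y⁻¹ = y ^ 3 := by
    have h : y ^ 3 * y = 1 := by rw [← pow_succ]; exact hy
    exact (eq_inv_of_mul_eq_one_left h).symm
  have xmod : ∀ a : ℕ, x ^ a = x ^ (a % (2 * g + 2)) := by
    intro a
    conv_lhs => rw [← Nat.div_add_mod a (2 * g + 2)]
    rw [pow_add, pow_mul, hx, one_pow, one_mul]
  have ymod : ∀ b : ℕ, y ^ b = y ^ (b % 4) := by
    intro b
    conv_lhs => rw [← Nat.div_add_mod b 4]
    rw [pow_add, pow_mul, hy, one_pow, one_mul]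
  -- the set of normal forms
  set S : Set P := {p : P | ∃ a b : ℕ, p = x ^ a * y ^ b} with hS
  have hcY : ∀ k : ℕ, Commute x (y ^ (2 * k)) := fun k => by
    rw [pow_mul]; exact (Commute.pow_right hc k)
  have stepy : ∀ p ∈ S, p * y ∈ S := by
    rintro p ⟨a, b, rfl⟩
    exact ⟨a, b + 1, by rw [pow_succ, mul_assoc]⟩
  have stepx : ∀ p ∈ S, p * x ∈ S := by
    rintro p ⟨a, b, rfl⟩
    rcases Nat.even_or_odd b with ⟨k, hk⟩ | ⟨k, hk⟩
    · refine ⟨a + 1, b, ?_⟩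
      have hcb : Commute x (y ^ b) := by
        rw [hk, show k + k = 2 * k by ring]; exact hcY k
      rw [mul_assoc, ← hcb.eq, ← mul_assoc, ← pow_succ]
    · refine ⟨a + (2 * g + 1), 2 * k + 3, ?_⟩
      subst hk
      have e1 : y ^ (2 * k + 1) * x = x⁻¹ * (y ^ (2 * k) * y⁻¹) := by
        rw [pow_succ, mul_assoc, hyx, ← mul_assoc, ← mul_assoc, (hcY k).inv_left.eq, mul_assoc]
      calc x ^ a * y ^ (2 * k + 1) * x
          = x ^ a * (y ^ (2 * k + 1) * x) := by rw [mul_assoc]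
        _ = x ^ a * (x⁻¹ * (y ^ (2 * k) * y⁻¹)) := by rw [e1]
        _ = x ^ a * (x ^ (2 * g + 1) * (y ^ (2 * k) * y ^ 3)) := by rw [xinv, yinv]
        _ = x ^ (a + (2 * g + 1)) * y ^ (2 * k + 3) := by
            rw [← mul_assoc, ← pow_add, ← pow_add]
  have one_memS : (1 : P) ∈ S := ⟨0, 0, by simp⟩
  have stepxpow : ∀ p ∈ S, ∀ c : ℕ, p * x ^ c ∈ S := by
    intro p hp c
    induction c with
    | zero => simpa using hp
    | succ c ih => rw [pow_succ, ← mul_assoc]; exact stepx _ ih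
  have stepypow : ∀ p ∈ S, ∀ c : ℕ, p * y ^ c ∈ S := by
    intro p hp c
    induction c with
    | zero => simpa using hp
    | succ c ih => rw [pow_succ, ← mul_assoc]; exact stepy _ ih
  -- S is a subgroup, hence everything
  set Sgrp : Subgroup P :=
    { carrier := S
      one_mem' := one_memS
      mul_mem' := by
        rintro p q hp ⟨c, d, rfl⟩
        rw [← mul_assoc]
        exact stepypow _ (stepxpow _ hp c) d
      inv_mem' := by
        rintro p ⟨a, b, rfl⟩
        have heq : (x ^ a * y ^ b)⁻¹ = 1 * y ^ (3 * b) * x ^ ((2 * g + 1) * a) := by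
          rw [mul_inv_rev, ← inv_pow, ← inv_pow, xinv, yinv, ← pow_mul, ← pow_mul, one_mul]
        rw [heq]
        exact stepxpow _ (stepypow _ one_memS (3 * b)) ((2 * g + 1) * a) } with hSgrp
  have genS : ∀ j : Fin 2, PresentedGroup.of j ∈ Sgrp := by
    intro j
    fin_cases j
    · exact ⟨1, 0, by simp [hxdef]⟩
    · exact ⟨0, 1, by simp [hydef]⟩
  have allS : ∀ p : P, p ∈ S := fun p => PresentedGroup.generated_by (amRels g) Sgrp genS p
  -- upper bound: surjection from ZMod (2g+2) × ZMod 4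
  set F : ZMod (2 * g + 2) × ZMod 4 → P := fun v => x ^ v.1.val * y ^ v.2.val with hF
  have Fsur : Function.Surjective F := by
    intro p
    obtain ⟨a, b, rfl⟩ := allS p
    refine ⟨((a : ZMod (2 * g + 2)), (b : ZMod 4)), ?_⟩
    simp only [hF, ZMod.val_natCast]
    rw [← xmod, ← ymod]
  haveI : Finite P := Finite.of_surjective F Fsur
  have upper : Nat.card P ≤ (2 * g + 2) * 4 := by
    have := Nat.card_le_card_of_surjective F Fsur
    simpa [Nat.card_prod, Nat.card_zmod] using this
  -- lower bound: surjection onto the model AM g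
  have hrel : ∀ r ∈ amRels g,
      FreeGroup.lift (fun t : Fin 2 => if t = 0 then A g else B g) r = 1 := by
    intro r hr
    simp only [amRels, Set.mem_insert_iff, Set.mem_singleton_iff] at hr
    rcases hr with rfl | rfl | rfl | rfl
    · rw [map_pow, FreeGroup.lift_apply_of, if_pos rfl, A_pow]
      ext <;> simp [one_i, one_j]
    · rw [map_pow, FreeGroup.lift_apply_of, if_neg (by decide), B_pow]
      ext
      · simp [one_i]
      · simp only [one_j]; decide
    · rw [map_pow, map_mul, FreeGroup.lift_apply_of, FreeGroup.lift_apply_of, if_pos rfl, if_neg (by decide)]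
      have hAB : A g * B g = (⟨1, 1⟩ : AM g) := by
        ext
        · simp [mul_i, A, B, sgn_zero]
        · simp [mul_j, A, B, emb_zero]
      rw [sq, hAB]
      ext
      · simp [mul_i, one_i, sgn_one, show par4 (1 : ZMod 4) = 1 from map_one _]
      · simp only [mul_j, one_j, map_one, mul_one,
          show par4 (1 : ZMod 4) = 1 from map_one _]
        decide
    · simp only [map_mul, map_inv, map_pow, FreeGroup.lift_apply_of,
        if_pos (rfl : (0 : Fin 2) = 0), if_neg (show (1 : Fin 2) ≠ 0 by decide)]
      have hB2 : (B g) ^ 2 = (⟨0, 2⟩ : AM g) := by rw [B_pow]; norm_num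
      have hcomm : A g * (⟨0, 2⟩ : AM g) = (⟨0, 2⟩ : AM g) * A g := by
        ext
        · simp [mul_i, A, sgn_zero, show par4 (2 : ZMod 4) = 0 by decide]
        · simp [mul_j, A, map_one, show par4 (2 : ZMod 4) = 0 by decide, emb_zero]
      rw [hB2]
      calc (A g)⁻¹ * (⟨0, 2⟩ : AM g)⁻¹ * A g * (⟨0, 2⟩ : AM g)
          = (A g)⁻¹ * ((⟨0, 2⟩ : AM g)⁻¹ * (A g * (⟨0, 2⟩ : AM g))) := by
            rw [mul_assoc, mul_assoc]
        _ = (A g)⁻¹ * ((⟨0, 2⟩ : AM g)⁻¹ * ((⟨0, 2⟩ : AM g) * A g)) := by rw [hcomm]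
        _ = 1 := by rw [inv_mul_cancel_left, inv_mul_cancel]
  set π : P →* AM g := PresentedGroup.toGroup hrel with hπ
  have πsur : Function.Surjective π := by
    intro v
    refine ⟨x ^ v.i.val * y ^ v.j.val, ?_⟩
    rw [map_mul, map_pow, map_pow, hxdef, hydef, hπ]
    rw [PresentedGroup.toGroup.of, PresentedGroup.toGroup.of, if_pos rfl, if_neg (by decide)]
    rw [A_pow_mul_B_pow]
    ext <;> simp [ZMod.natCast_rightInverse v.i, ZMod.natCast_rightInverse v.j]
  have lower : (2 * g + 2) * 4 ≤ Nat.card P := by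
    have := Nat.card_le_card_of_surjective π πsur
    rwa [card_AM] at this
  omega
end

section
/- For g ≡ 3 (mod 4), the Accola-Maclachlan group AM_g and the Kulkarni group K_g are not isomorphic. -/
/-- Relators of the Kulkarni group
`K_g = ⟨a, b | a^(2g+2) = b^4 = (ab)^2 = 1, b²ab² = a^(g+2)⟩`. -/
def kRels (g : ℕ) : Set (FreeGroup (Fin 2)) :=
  { (FreeGroup.of 0) ^ (2 * g + 2),
    (FreeGroup.of 1) ^ 4,
    (FreeGroup.of 0 * FreeGroup.of 1) ^ 2,
    (FreeGroup.of 1) ^ 2 * FreeGroup.of 0 * (FreeGroup.of 1) ^ 2 *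
      ((FreeGroup.of 0) ^ (g + 2))⁻¹ }

namespace AMKAux

/-! ### Generic group-word lemmas -/

section GenericGroup

variable {G : Type*} [Group G] (a b : G)

lemma lem_b2b2 (hB : b ^ 4 = 1) : b ^ 2 * b ^ 2 = 1 := by
  rw [← pow_add]; exact hB

lemma lem_b2inv (hB : b ^ 4 = 1) : (b ^ 2)⁻¹ = b ^ 2 :=
  inv_eq_of_mul_eq_one_right (lem_b2b2 b hB)

lemma lem_ba (hAB : (a * b) ^ 2 = 1) : b * a = a⁻¹ * b⁻¹ := by
  have h : a * b * (a * b) = 1 := by rw [← pow_two]; exact hAB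
  calc b * a = a⁻¹ * (a * b * (a * b)) * b⁻¹ := by group
    _ = a⁻¹ * b⁻¹ := by rw [h]; group

lemma lem_conjb (hB : b ^ 4 = 1) (hAB : (a * b) ^ 2 = 1) :
    b * a * b⁻¹ = a⁻¹ * b ^ 2 := by
  calc b * a * b⁻¹ = (b * a) * b⁻¹ := by group
    _ = (a⁻¹ * b⁻¹) * b⁻¹ := by rw [lem_ba a b hAB]
    _ = a⁻¹ * (b ^ 2)⁻¹ := by group
    _ = a⁻¹ * b ^ 2 := by rw [lem_b2inv b hB]

end GenericGroup

/-! ### The permutation model -/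

section PermModel

variable (g : ℕ)

/-- Parity indicator. -/
def ep (p : ZMod 2) : ZMod (g + 1) := if p = 1 then 1 else 0

lemma zmod2_cases : ∀ p : ZMod 2, p = 0 ∨ p = 1 := by decide

lemma z2succsucc : ∀ p : ZMod 2, p + 1 + 1 = p := by decide

lemma ep_zero : ep g 0 = 0 := by simp [ep]

lemma ep_add_one (p : ZMod 2) : ep g (p + 1) = 1 - ep g p := by
  rcases zmod2_cases p with h | h <;> subst h <;> simp [ep]

/-- The permutation modelling the generator `a`. -/
def alphaP : Equiv.Perm (ZMod 2 × ZMod (g + 1)) where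
  toFun x := (x.1 + 1, x.2 + ep g x.1)
  invFun x := (x.1 + 1, x.2 - ep g (x.1 + 1))
  left_inv x := by
    obtain ⟨p, q⟩ := x
    simp only [Prod.mk.injEq]
    constructor
    · exact z2succsucc p
    · rw [z2succsucc p]; ring
  right_inv x := by
    obtain ⟨p, q⟩ := x
    simp only [Prod.mk.injEq]
    constructor
    · exact z2succsucc p
    · ring

/-- The permutation modelling the generator `b`, where `c` is a square root of `1`. -/
def betaP (c : ZMod (g + 1)) (hc : c * c = 1) : Equiv.Perm (ZMod 2 × ZMod (g + 1)) where
  toFun x := (x.1, -c * x.2 - ep g x.1)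
  invFun x := (x.1, -c * x.2 - c * ep g x.1)
  left_inv x := by
    obtain ⟨p, q⟩ := x
    simp only [Prod.mk.injEq, true_and]
    linear_combination q * hc
  right_inv x := by
    obtain ⟨p, q⟩ := x
    simp only [Prod.mk.injEq, true_and]
    linear_combination (q + ep g p) * hc

lemma alphaP_apply (x) : alphaP g x = (x.1 + 1, x.2 + ep g x.1) := rfl

lemma betaP_apply (c hc x) : betaP g c hc x = (x.1, -c * x.2 - ep g x.1) := rfl

lemma alpha_sq_apply (x) : ((alphaP g) ^ 2) x = (x.1, x.2 + 1) := by
  rw [pow_two, Equiv.Perm.mul_apply, alphaP_apply, alphaP_apply]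
  obtain ⟨p, q⟩ := x
  simp only [Prod.mk.injEq]
  constructor
  · exact z2succsucc p
  · rw [ep_add_one]; ring

lemma alpha_even_pow_apply (k : ℕ) (x) :
    ((alphaP g) ^ (2 * k)) x = (x.1, x.2 + (k : ZMod (g + 1))) := by
  induction k generalizing x with
  | zero => simp
  | succ n ih =>
      have h : 2 * (n + 1) = 2 * n + 2 := by ring
      rw [h, pow_add, Equiv.Perm.mul_apply, alpha_sq_apply, ih]
      simp only [Prod.mk.injEq, true_and]
      push_cast
      ring

lemma alpha_even_zpow_apply (i : ℤ) (x) :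
    ((alphaP g) ^ (2 * i)) x = (x.1, x.2 + (i : ZMod (g + 1))) := by
  rcases i with n | n
  · have h : (2 * (Int.ofNat n) : ℤ) = ((2 * n : ℕ) : ℤ) := by push_cast [Int.ofNat_eq_natCast]; ring
    rw [h, zpow_natCast, alpha_even_pow_apply]
    simp only [Int.ofNat_eq_natCast, Int.cast_natCast]
  · have h : (2 * (Int.negSucc n) : ℤ) = -((2 * (n + 1) : ℕ) : ℤ) := by
      rw [Int.negSucc_eq]; push_cast; ring
    rw [h, zpow_neg, zpow_natCast, Equiv.Perm.inv_def, Equiv.symm_apply_eq,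
      alpha_even_pow_apply]
    obtain ⟨p, q⟩ := x
    simp only [Prod.mk.injEq, true_and]
    rw [Int.cast_negSucc]
    push_cast
    ring

lemma beta_sq_apply (c hc) (x) :
    ((betaP g c hc) ^ 2) x = (x.1, x.2 + (c - 1) * ep g x.1) := by
  rw [pow_two, Equiv.Perm.mul_apply, betaP_apply, betaP_apply]
  obtain ⟨p, q⟩ := x
  simp only [Prod.mk.injEq, true_and]
  linear_combination q * hc

/-- Relator 1 check. -/
lemma check_r1 : (alphaP g) ^ (2 * g + 2) = 1 := by
  have h : 2 * g + 2 = 2 * (g + 1) := by ring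
  rw [h]
  apply Equiv.ext
  intro x
  rw [alpha_even_pow_apply, Equiv.Perm.one_apply, ZMod.natCast_self, add_zero]

/-- Relator 2 check. -/
lemma check_r2 (c hc) (hc2 : (c - 1) + (c - 1) = 0) : (betaP g c hc) ^ 4 = 1 := by
  have h : (4 : ℕ) = 2 + 2 := rfl
  rw [h, pow_add]
  apply Equiv.ext
  intro x
  rw [Equiv.Perm.mul_apply, beta_sq_apply, beta_sq_apply, Equiv.Perm.one_apply]
  obtain ⟨p, q⟩ := x
  simp only [Prod.mk.injEq, true_and]
  linear_combination ep g p * hc2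

/-- Relator 3 check. -/
lemma check_r3 (c hc) : (alphaP g * betaP g c hc) ^ 2 = 1 := by
  apply Equiv.ext
  intro x
  rw [pow_two, Equiv.Perm.mul_apply, Equiv.Perm.mul_apply, Equiv.Perm.mul_apply,
    Equiv.Perm.one_apply, alphaP_apply, betaP_apply, alphaP_apply, betaP_apply]
  obtain ⟨p, q⟩ := x
  simp only [Prod.mk.injEq]
  constructor
  · exact z2succsucc p
  · linear_combination q * hc

/-- Kulkarni relator 4 check. -/
lemma check_r4K (M : ℕ) (hgM : g + 1 = 4 * M) (hc) :
    (betaP g (2 * (M : ZMod (g + 1)) + 1) hc) ^ 2 * alphaP g *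
      (betaP g (2 * (M : ZMod (g + 1)) + 1) hc) ^ 2 = (alphaP g) ^ (g + 2) := by
  set c : ZMod (g + 1) := 2 * (M : ZMod (g + 1)) + 1 with hcdef
  have hexp : g + 2 = 2 * (2 * M) + 1 := by omega
  apply Equiv.ext
  intro x
  rw [Equiv.Perm.mul_apply, Equiv.Perm.mul_apply, beta_sq_apply, alphaP_apply,
    beta_sq_apply, hexp, pow_succ, Equiv.Perm.mul_apply, alphaP_apply,
    alpha_even_pow_apply]
  obtain ⟨p, q⟩ := x
  simp only [Prod.mk.injEq, true_and]
  rw [ep_add_one]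
  push_cast
  ring

end PermModel


/-! ### Lift checks for the two presentations -/

section Checks

variable (g : ℕ)

lemma beta_one_sq (hc : (1 : ZMod (g + 1)) * 1 = 1) : (betaP g 1 hc) ^ 2 = 1 := by
  apply Equiv.ext
  intro x
  rw [beta_sq_apply, Equiv.Perm.one_apply]
  simp

lemma cK_fact (M : ℕ) (hgM : g + 1 = 4 * M) :
    ((4 * M : ℕ) : ZMod (g + 1)) = 0 := by
  rw [← hgM]; exact ZMod.natCast_self _

lemma cK_sq (M : ℕ) (hgM : g + 1 = 4 * M) :
    (2 * (M : ZMod (g + 1)) + 1) * (2 * (M : ZMod (g + 1)) + 1) = 1 := by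
  have h4 := cK_fact g M hgM
  push_cast at h4
  linear_combination ((M : ZMod (g + 1)) + 1) * h4

lemma cK_hc2 (M : ℕ) (hgM : g + 1 = 4 * M) :
    ((2 * (M : ZMod (g + 1)) + 1) - 1) + ((2 * (M : ZMod (g + 1)) + 1) - 1) = 0 := by
  have h4 := cK_fact g M hgM
  push_cast at h4
  linear_combination h4

lemma kRels_check (M : ℕ) (hgM : g + 1 = 4 * M) :
    ∀ r ∈ kRels g,
      FreeGroup.lift ![alphaP g, betaP g (2 * (M : ZMod (g + 1)) + 1) (cK_sq g M hgM)] r = 1 := by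
  intro r hr
  simp only [kRels, Set.mem_insert_iff, Set.mem_singleton_iff] at hr
  rcases hr with rfl | rfl | rfl | rfl <;>
    simp only [map_mul, map_pow, map_inv, FreeGroup.lift_apply_of, Matrix.cons_val_zero,
      Matrix.cons_val_one, Matrix.head_cons]
  · exact check_r1 g
  · exact check_r2 g _ (cK_sq g M hgM) (cK_hc2 g M hgM)
  · exact check_r3 g _ (cK_sq g M hgM)
  · rw [mul_inv_eq_one]
    exact check_r4K g M hgM (cK_sq g M hgM)

lemma amRels_check :
    ∀ r ∈ amRels g,
      FreeGroup.lift ![alphaP g, betaP g 1 (one_mul 1)] r = 1 := by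
  intro r hr
  simp only [amRels, Set.mem_insert_iff, Set.mem_singleton_iff] at hr
  rcases hr with rfl | rfl | rfl | rfl <;>
    simp only [map_mul, map_pow, map_inv, FreeGroup.lift_apply_of, Matrix.cons_val_zero,
      Matrix.cons_val_one, Matrix.head_cons]
  · exact check_r1 g
  · exact check_r2 g _ (one_mul 1) (by ring)
  · exact check_r3 g _ (one_mul 1)
  · rw [beta_one_sq g (one_mul 1)]
    group

lemma ofAdd_one_pow (n : ℕ) :
    (Multiplicative.ofAdd (1 : ZMod 4)) ^ n = Multiplicative.ofAdd ((n : ZMod 4)) := by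
  induction n with
  | zero => simp
  | succ m ih =>
      rw [pow_succ, ih, ← ofAdd_add]
      norm_cast

lemma amRels_check2 (k : ℕ) (hk : g = 4 * k + 3) :
    ∀ r ∈ amRels g,
      FreeGroup.lift (fun _ : Fin 2 => Multiplicative.ofAdd (1 : ZMod 4)) r = 1 := by
  intro r hr
  simp only [amRels, Set.mem_insert_iff, Set.mem_singleton_iff] at hr
  have h8 : (8 : ZMod 4) = 0 := by decide
  rcases hr with rfl | rfl | rfl | rfl <;>
    simp only [map_mul, map_pow, map_inv, FreeGroup.lift_apply_of]
  · rw [ofAdd_one_pow]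
    subst hk
    have h0 : ((2 * (4 * k + 3) + 2 : ℕ) : ZMod 4) = 0 := by
      push_cast
      linear_combination ((k : ZMod 4) + 1) * h8
    rw [h0]
    rfl
  · decide
  · decide
  · decide

end Checks

/-! ### Relations in a presented group -/

section Rels

lemma rel_one {α : Type*} {rels : Set (FreeGroup α)} {r : FreeGroup α} (h : r ∈ rels) :
    PresentedGroup.mk rels r = 1 :=
  (QuotientGroup.eq_one_iff r).mpr (Subgroup.subset_normalClosure h)

end Rels

/-! ### Word lemmas for the Kulkarni presentation, in a generic group -/

section KWords

variable {G : Type*} [Group G] (g : ℕ) (a b : G)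

lemma lem_conjb2 (hB : b ^ 4 = 1) (hR : b ^ 2 * a * b ^ 2 = a ^ (g + 2)) :
    b ^ 2 * a * (b ^ 2)⁻¹ = a ^ (g + 2) := by
  rw [lem_b2inv b hB]; exact hR

lemma lem_conjb2_zpow (hB : b ^ 4 = 1) (hR : b ^ 2 * a * b ^ 2 = a ^ (g + 2)) (i : ℤ) :
    b ^ 2 * a ^ i * (b ^ 2)⁻¹ = (a ^ (g + 2)) ^ i := by
  have h := map_zpow (MulAut.conj (b ^ 2)) a i
  simp only [MulAut.conj_apply] at h
  rw [h, lem_conjb2 g a b hB hR]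

lemma lem_conjb2_inv (hB : b ^ 4 = 1) (hR : b ^ 2 * a * b ^ 2 = a ^ (g + 2)) :
    b ^ 2 * a⁻¹ * (b ^ 2)⁻¹ = (a ^ (g + 2))⁻¹ := by
  have h := map_inv (MulAut.conj (b ^ 2)) a
  simp only [MulAut.conj_apply] at h
  rw [h, lem_conjb2 g a b hB hR]

lemma lem_conjb_zpow (hB : b ^ 4 = 1) (hAB : (a * b) ^ 2 = 1) (i : ℤ) :
    b * a ^ i * b⁻¹ = (a⁻¹ * b ^ 2) ^ i := by
  have h := map_zpow (MulAut.conj b) a i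
  simp only [MulAut.conj_apply] at h
  rw [h, lem_conjb a b hB hAB]

lemma lem_u2 (hB : b ^ 4 = 1) (hR : b ^ 2 * a * b ^ 2 = a ^ (g + 2)) :
    (a⁻¹ * b ^ 2) * (a⁻¹ * b ^ 2) = (a ^ (g + 3))⁻¹ := by
  calc (a⁻¹ * b ^ 2) * (a⁻¹ * b ^ 2)
      = a⁻¹ * (b ^ 2 * a⁻¹ * (b ^ 2)⁻¹) * (b ^ 2 * b ^ 2) := by group
    _ = a⁻¹ * (a ^ (g + 2))⁻¹ * 1 := by
        rw [lem_conjb2_inv g a b hB hR, lem_b2b2 b hB]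
    _ = (a ^ (g + 2) * a)⁻¹ := by group
    _ = (a ^ (g + 3))⁻¹ := by rw [← pow_succ]

lemma lem_u_even (hB : b ^ 4 = 1) (hR : b ^ 2 * a * b ^ 2 = a ^ (g + 2)) (s : ℤ) :
    (a⁻¹ * b ^ 2) ^ (2 * s) = a ^ (-((g + 3 : ℕ) : ℤ) * s) := by
  have hbase : (a⁻¹ * b ^ 2) ^ (2 : ℤ) = a ^ (-((g + 3 : ℕ) : ℤ)) := by
    rw [show (2 : ℤ) = ((2 : ℕ) : ℤ) from rfl, zpow_natCast, pow_two,
      lem_u2 g a b hB hR, zpow_neg, zpow_natCast]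
  calc (a⁻¹ * b ^ 2) ^ (2 * s) = ((a⁻¹ * b ^ 2) ^ (2 : ℤ)) ^ s := by rw [zpow_mul]
    _ = (a ^ (-((g + 3 : ℕ) : ℤ))) ^ s := by rw [hbase]
    _ = a ^ (-((g + 3 : ℕ) : ℤ) * s) := by rw [← zpow_mul]

lemma lem_bA (hB : b ^ 4 = 1) (hAB : (a * b) ^ 2 = 1)
    (hR : b ^ 2 * a * b ^ 2 = a ^ (g + 2)) (i : ℤ) :
    (∃ i' : ℤ, b * a ^ i = a ^ i' * b) ∨ (∃ i' : ℤ, b * a ^ i = a ^ i' * b ^ 3) := by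
  have hco : b * a ^ i = (a⁻¹ * b ^ 2) ^ i * b := by
    calc b * a ^ i = (b * a ^ i * b⁻¹) * b := by group
      _ = (a⁻¹ * b ^ 2) ^ i * b := by rw [lem_conjb_zpow a b hB hAB]
  rcases Int.even_or_odd i with ⟨s, hs⟩ | ⟨s, hs⟩
  · left
    refine ⟨-((g + 3 : ℕ) : ℤ) * s, ?_⟩
    rw [hco, show i = 2 * s from by omega, lem_u_even g a b hB hR]
  · right
    refine ⟨-((g + 3 : ℕ) : ℤ) * s + (-1), ?_⟩
    rw [hco, hs, zpow_add, zpow_one, lem_u_even g a b hB hR, zpow_add]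
    calc a ^ (-((g + 3 : ℕ) : ℤ) * s) * (a⁻¹ * b ^ 2) * b
        = a ^ (-((g + 3 : ℕ) : ℤ) * s) * a ^ (-1 : ℤ) * b ^ 3 := by group
      _ = _ := rfl

lemma lem_bjA (hB : b ^ 4 = 1) (hAB : (a * b) ^ 2 = 1)
    (hR : b ^ 2 * a * b ^ 2 = a ^ (g + 2)) (j : ℕ) (hj : j ≤ 4) (i : ℤ) :
    ∃ (i' : ℤ) (j' : ℕ), j' < 4 ∧ b ^ j * a ^ i = a ^ i' * b ^ j' := by
  interval_cases j
  · exact ⟨i, 0, by omega, by simp⟩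
  · rcases lem_bA g a b hB hAB hR i with ⟨i', h⟩ | ⟨i', h⟩
    · exact ⟨i', 1, by omega, by simpa using h⟩
    · exact ⟨i', 3, by omega, by simpa using h⟩
  · refine ⟨((g + 2 : ℕ) : ℤ) * i, 2, by omega, ?_⟩
    calc b ^ 2 * a ^ i = (b ^ 2 * a ^ i * (b ^ 2)⁻¹) * b ^ 2 := by group
      _ = (a ^ (g + 2)) ^ i * b ^ 2 := by rw [lem_conjb2_zpow g a b hB hR]
      _ = a ^ (((g + 2 : ℕ) : ℤ) * i) * b ^ 2 := by rw [zpow_mul, zpow_natCast]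
  · have h2 : b ^ 2 * a ^ i = a ^ (((g + 2 : ℕ) : ℤ) * i) * b ^ 2 := by
      calc b ^ 2 * a ^ i = (b ^ 2 * a ^ i * (b ^ 2)⁻¹) * b ^ 2 := by group
        _ = (a ^ (g + 2)) ^ i * b ^ 2 := by rw [lem_conjb2_zpow g a b hB hR]
        _ = a ^ (((g + 2 : ℕ) : ℤ) * i) * b ^ 2 := by rw [zpow_mul, zpow_natCast]
    have h3 : b ^ 3 * a ^ i = b * (a ^ (((g + 2 : ℕ) : ℤ) * i) * b ^ 2) := by
      rw [← h2]; group
    rcases lem_bA g a b hB hAB hR (((g + 2 : ℕ) : ℤ) * i) with ⟨i', h⟩ | ⟨i', h⟩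
    · refine ⟨i', 3, by omega, ?_⟩
      rw [h3, show b * (a ^ (((g + 2 : ℕ) : ℤ) * i) * b ^ 2)
          = (b * a ^ (((g + 2 : ℕ) : ℤ) * i)) * b ^ 2 from by group, h]
      group
    · refine ⟨i', 1, by omega, ?_⟩
      rw [h3, show b * (a ^ (((g + 2 : ℕ) : ℤ) * i) * b ^ 2)
          = (b * a ^ (((g + 2 : ℕ) : ℤ) * i)) * b ^ 2 from by group, h]
      calc a ^ i' * b ^ 3 * b ^ 2 = a ^ i' * b * b ^ 4 := by group
        _ = a ^ i' * b ^ 1 := by rw [hB]; group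
  · exact ⟨i, 0, by omega, by rw [hB]; simp⟩

lemma lem_mul_nf (hB : b ^ 4 = 1) (hAB : (a * b) ^ 2 = 1)
    (hR : b ^ 2 * a * b ^ 2 = a ^ (g + 2)) (i₁ i₂ : ℤ) (j₁ j₂ : ℕ)
    (hj₁ : j₁ < 4) (hj₂ : j₂ < 4) :
    ∃ (i' : ℤ) (j' : ℕ), j' < 4 ∧ (a ^ i₁ * b ^ j₁) * (a ^ i₂ * b ^ j₂) = a ^ i' * b ^ j' := by
  obtain ⟨i₀, j₀, hj₀, h₀⟩ := lem_bjA g a b hB hAB hR j₁ (by omega) i₂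
  have hstep : (a ^ i₁ * b ^ j₁) * (a ^ i₂ * b ^ j₂) = a ^ (i₁ + i₀) * b ^ (j₀ + j₂) := by
    calc (a ^ i₁ * b ^ j₁) * (a ^ i₂ * b ^ j₂)
        = a ^ i₁ * (b ^ j₁ * a ^ i₂) * b ^ j₂ := by group
      _ = a ^ i₁ * (a ^ i₀ * b ^ j₀) * b ^ j₂ := by rw [h₀]
      _ = a ^ (i₁ + i₀) * b ^ (j₀ + j₂) := by rw [zpow_add, pow_add]; group
  by_cases hlt : j₀ + j₂ < 4
  · exact ⟨i₁ + i₀, j₀ + j₂, hlt, hstep⟩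
  · obtain ⟨m, hm⟩ : ∃ m, j₀ + j₂ = m + 4 := ⟨j₀ + j₂ - 4, by omega⟩
    refine ⟨i₁ + i₀, m, by omega, ?_⟩
    rw [hstep, hm, pow_add, hB, mul_one]

end KWords


/-! ### The two presented groups: generators, relations, normal form -/

section Presented

variable (g : ℕ)

/-- The Kulkarni group. -/
abbrev KG := PresentedGroup (kRels g)

/-- The Accola–Maclachlan group. -/
abbrev AMG := PresentedGroup (amRels g)

def kA : KG g := PresentedGroup.of 0
def kB : KG g := PresentedGroup.of 1
def amA : AMG g := PresentedGroup.of 0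
def amB : AMG g := PresentedGroup.of 1

lemma kA_pow : (kA g) ^ (2 * g + 2) = 1 := by
  have h := rel_one (show (FreeGroup.of 0 : FreeGroup (Fin 2)) ^ (2 * g + 2) ∈ kRels g
    from by simp [kRels])
  rw [map_pow] at h
  exact h

lemma kB_pow : (kB g) ^ 4 = 1 := by
  have h := rel_one (show (FreeGroup.of 1 : FreeGroup (Fin 2)) ^ 4 ∈ kRels g
    from by simp [kRels])
  rw [map_pow] at h
  exact h

lemma kAB : (kA g * kB g) ^ 2 = 1 := by
  have h := rel_one (show ((FreeGroup.of 0 * FreeGroup.of 1 : FreeGroup (Fin 2))) ^ 2 ∈ kRels g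
    from by simp [kRels])
  rw [map_pow, map_mul] at h
  exact h

lemma kR : kB g ^ 2 * kA g * kB g ^ 2 = kA g ^ (g + 2) := by
  have h := rel_one (show (FreeGroup.of 1 ^ 2 * FreeGroup.of 0 * FreeGroup.of 1 ^ 2 *
      ((FreeGroup.of 0 : FreeGroup (Fin 2)) ^ (g + 2))⁻¹) ∈ kRels g from by simp [kRels])
  simp only [map_mul, map_pow, map_inv] at h
  rw [mul_inv_eq_one] at h
  exact h

lemma amA_pow : (amA g) ^ (2 * g + 2) = 1 := by
  have h := rel_one (show (FreeGroup.of 0 : FreeGroup (Fin 2)) ^ (2 * g + 2) ∈ amRels g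
    from by simp [amRels])
  rw [map_pow] at h
  exact h

lemma amB_pow : (amB g) ^ 4 = 1 := by
  have h := rel_one (show (FreeGroup.of 1 : FreeGroup (Fin 2)) ^ 4 ∈ amRels g
    from by simp [amRels])
  rw [map_pow] at h
  exact h

lemma amAB : (amA g * amB g) ^ 2 = 1 := by
  have h := rel_one (show ((FreeGroup.of 0 * FreeGroup.of 1 : FreeGroup (Fin 2))) ^ 2 ∈ amRels g
    from by simp [amRels])
  rw [map_pow, map_mul] at h
  exact h

lemma amComm : amA g * amB g ^ 2 = amB g ^ 2 * amA g := by
  have h := rel_one (show ((FreeGroup.of 0)⁻¹ * ((FreeGroup.of 1 : FreeGroup (Fin 2)) ^ 2)⁻¹ *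
      FreeGroup.of 0 * FreeGroup.of 1 ^ 2) ∈ amRels g from by simp [amRels])
  simp only [map_mul, map_pow, map_inv] at h
  have h' : (amA g)⁻¹ * (amB g ^ 2)⁻¹ * amA g * amB g ^ 2 = 1 := h
  have h2 : amA g * amB g ^ 2 =
      (amB g ^ 2 * amA g) * ((amA g)⁻¹ * (amB g ^ 2)⁻¹ * amA g * amB g ^ 2) := by group
  rw [h', mul_one] at h2
  exact h2

/-- Normal form in the Kulkarni group. -/
lemma k_nf (x : KG g) : ∃ (i : ℤ) (j : ℕ), j < 4 ∧ x = kA g ^ i * kB g ^ j := by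
  induction x using PresentedGroup.induction_on with
  | H z => ?_
  induction z using FreeGroup.induction_on with
  | C1 => exact ⟨0, 0, by omega, by simp⟩
  | of y =>
      fin_cases y
      · exact ⟨1, 0, by omega, by simp [kA]; rfl⟩
      · exact ⟨0, 1, by omega, by simp [kB]; rfl⟩
  | inv_of y ih =>
      fin_cases y
      · exact ⟨-1, 0, by omega, by simp [kA]; rfl⟩
      · refine ⟨0, 3, by omega, ?_⟩
        have hb3 : (kB g)⁻¹ = kB g ^ 3 := by
          apply inv_eq_of_mul_eq_one_left
          calc kB g ^ 3 * kB g = kB g ^ 4 := by group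
            _ = 1 := kB_pow g
        rw [map_inv]
        show (kB g)⁻¹ = kA g ^ (0 : ℤ) * kB g ^ 3
        rw [hb3, zpow_zero, one_mul]
  | mul x y ihx ihy =>
      obtain ⟨i₁, j₁, hj₁, h₁⟩ := ihx
      obtain ⟨i₂, j₂, hj₂, h₂⟩ := ihy
      obtain ⟨i', j', hj', h'⟩ := lem_mul_nf g (kA g) (kB g) (kB_pow g) (kAB g) (kR g)
        i₁ i₂ j₁ j₂ hj₁ hj₂
      refine ⟨i', j', hj', ?_⟩
      rw [map_mul, h₁, h₂, h']

end Presented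


/-! ### Centrality in the Accola–Maclachlan group -/

section AMCentral

variable (g : ℕ)

lemma am_x0_sq : ((amA g) ^ (g + 1)) ^ 2 = 1 := by
  rw [← pow_mul, show (g + 1) * 2 = 2 * g + 2 from by ring]
  exact amA_pow g

lemma am_y0_sq : ((amB g) ^ 2) ^ 2 = 1 := by
  rw [← pow_mul]
  exact amB_pow g

lemma am_b_conj_x0 (M : ℕ) (hgM : g + 1 = 4 * M) :
    amB g * (amA g) ^ (g + 1) * (amB g)⁻¹ = (amA g) ^ (g + 1) := by
  have hconj := lem_conjb (amA g) (amB g) (amB_pow g) (amAB g)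
  have hcommc : Commute ((amA g))⁻¹ ((amB g) ^ 2) :=
    (show Commute (amA g) ((amB g) ^ 2) from amComm g).inv_left
  have hmp := map_pow (MulAut.conj (amB g)) (amA g) (g + 1)
  simp only [MulAut.conj_apply] at hmp
  rw [hconj, hcommc.mul_pow, inv_pow] at hmp
  have hb2g : ((amB g) ^ 2) ^ (g + 1) = 1 := by
    rw [← pow_mul, show 2 * (g + 1) = 4 * (2 * M) from by omega, pow_mul,
      amB_pow g, one_pow]
  rw [hb2g, mul_one] at hmp
  have hx0inv : ((amA g) ^ (g + 1))⁻¹ = (amA g) ^ (g + 1) :=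
    inv_eq_of_mul_eq_one_right (by rw [← pow_two, am_x0_sq])
  rw [hx0inv] at hmp
  exact hmp

lemma am_x0_central (M : ℕ) (hgM : g + 1 = 4 * M) (w : AMG g) :
    (amA g) ^ (g + 1) * w = w * (amA g) ^ (g + 1) := by
  have hw : w ∈ Subgroup.centralizer {(amA g) ^ (g + 1)} := by
    apply PresentedGroup.generated_by
    intro j
    rw [Subgroup.mem_centralizer_iff]
    intro h hh
    rw [Set.mem_singleton_iff] at hh
    subst hh
    fin_cases j
    · exact ((Commute.refl (amA g)).pow_left (g + 1)).eq
    · have hmp := am_b_conj_x0 g M hgM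
      show (amA g) ^ (g + 1) * amB g = amB g * (amA g) ^ (g + 1)
      calc (amA g) ^ (g + 1) * amB g
          = (amB g * (amA g) ^ (g + 1) * (amB g)⁻¹) * amB g := by rw [hmp]
        _ = amB g * (amA g) ^ (g + 1) := by group
  exact (Subgroup.mem_centralizer_iff.mp hw) _ (Set.mem_singleton _)

lemma am_y0_central (w : AMG g) :
    (amB g) ^ 2 * w = w * (amB g) ^ 2 := by
  have hw : w ∈ Subgroup.centralizer {(amB g) ^ 2} := by
    apply PresentedGroup.generated_by
    intro j
    rw [Subgroup.mem_centralizer_iff]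
    intro h hh
    rw [Set.mem_singleton_iff] at hh
    subst hh
    fin_cases j
    · exact (amComm g).symm
    · exact ((Commute.refl (amB g)).pow_right 2).eq.symm ▸ rfl
  exact (Subgroup.mem_centralizer_iff.mp hw) _ (Set.mem_singleton _)

/-- `α^(g+1)` is not the identity permutation. -/
lemma alpha_g1_ne (M : ℕ) (hgM : g + 1 = 4 * M) : (alphaP g) ^ (g + 1) ≠ 1 := by
  intro h
  have hpow : (alphaP g) ^ (g + 1) = (alphaP g) ^ (2 * (2 * M)) := by
    congr 1
    omega
  rw [hpow] at h
  have h' := congrArg (fun f => f ((0, 0) : ZMod 2 × ZMod (g + 1))) h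
  simp only [Equiv.Perm.one_apply] at h'
  rw [alpha_even_pow_apply] at h'
  have h2 : ((2 * M : ℕ) : ZMod (g + 1)) = 0 := by
    have := congrArg Prod.snd h'
    simpa using this
  have hd := (ZMod.natCast_eq_zero_iff _ _).mp h2
  have := Nat.le_of_dvd (by omega) hd
  omega

end AMCentral

end AMKAux

open AMKAux in
/-- For `g ≡ 3 (mod 4)`, the Accola–Maclachlan group `AM_g` and the Kulkarni group
`K_g` are not isomorphic. -/
theorem am_not_iso_kulkarni (g : ℕ) (hg : g % 4 = 3) :
    IsEmpty (PresentedGroup (amRels g) ≃* PresentedGroup (kRels g)) := by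
  obtain ⟨k, hk⟩ : ∃ k, g = 4 * k + 3 := ⟨g / 4, by omega⟩
  obtain ⟨M, hgM, hM1⟩ : ∃ M, g + 1 = 4 * M ∧ 1 ≤ M := ⟨k + 1, by omega, by omega⟩
  haveI : NeZero (g + 1) := ⟨by omega⟩
  haveI : Fact (1 < g + 1) := ⟨by omega⟩
  constructor
  intro θ
  -- homomorphisms out of the Accola–Maclachlan group
  have hfA := amRels_check g
  set φA := PresentedGroup.toGroup hfA with hφAdef
  have hφAa : φA (amA g) = alphaP g := by
    rw [hφAdef]
    show PresentedGroup.toGroup hfA (PresentedGroup.of 0) = _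
    rw [PresentedGroup.toGroup.of]
    simp
  have hφAb : φA (amB g) = betaP g 1 (one_mul 1) := by
    rw [hφAdef]
    show PresentedGroup.toGroup hfA (PresentedGroup.of 1) = _
    rw [PresentedGroup.toGroup.of]
    simp
  have hfA2 := amRels_check2 g k hk
  set φB := PresentedGroup.toGroup hfA2 with hφBdef
  have hφBb : φB (amB g) = Multiplicative.ofAdd (1 : ZMod 4) := by
    rw [hφBdef]
    show PresentedGroup.toGroup hfA2 (PresentedGroup.of 1) = _
    rw [PresentedGroup.toGroup.of]
  -- the two central involutions of AM are nontrivial and distinct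
  have hx0ne1 : (amA g) ^ (g + 1) ≠ 1 := by
    intro h
    apply alpha_g1_ne g M hgM
    have h2 := congrArg (fun z => φA z) h
    simpa [map_pow, hφAa] using h2
  have hy0ne1 : (amB g) ^ 2 ≠ 1 := by
    intro h
    have h2 := congrArg (fun z => φB z) h
    simp only [map_pow, hφBb, map_one] at h2
    exact absurd h2 (by decide)
  have hx0ney0 : (amA g) ^ (g + 1) ≠ (amB g) ^ 2 := by
    intro h
    apply alpha_g1_ne g M hgM
    have h2 := congrArg (fun z => φA z) h
    simp only [map_pow, hφAa, hφAb] at h2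
    rw [h2, beta_one_sq g (one_mul 1)]
  -- transported elements
  have hXc : ∀ w, θ ((amA g) ^ (g + 1)) * w = w * θ ((amA g) ^ (g + 1)) := by
    intro w
    have h := am_x0_central g M hgM (θ.symm w)
    have h2 := congrArg θ h
    simpa [map_mul] using h2
  have hYc : ∀ w, θ ((amB g) ^ 2) * w = w * θ ((amB g) ^ 2) := by
    intro w
    have h := am_y0_central g (θ.symm w)
    have h2 := congrArg θ h
    simpa [map_mul] using h2
  have hX2 : (θ ((amA g) ^ (g + 1))) ^ 2 = 1 := by
    rw [← map_pow, am_x0_sq, map_one]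
  have hY2 : (θ ((amB g) ^ 2)) ^ 2 = 1 := by
    rw [← map_pow, am_y0_sq, map_one]
  have hX1 : θ ((amA g) ^ (g + 1)) ≠ 1 := fun h =>
    hx0ne1 (θ.injective (h.trans (map_one θ).symm))
  have hY1 : θ ((amB g) ^ 2) ≠ 1 := fun h =>
    hy0ne1 (θ.injective (h.trans (map_one θ).symm))
  have hXY : θ ((amA g) ^ (g + 1)) ≠ θ ((amB g) ^ 2) := fun h =>
    hx0ney0 (θ.injective h)
  -- the homomorphism out of the Kulkarni group
  have hfK := kRels_check g M hgM
  set ψ := PresentedGroup.toGroup hfK with hψdef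
  have hψA : ψ (kA g) = alphaP g := by
    rw [hψdef]
    show PresentedGroup.toGroup hfK (PresentedGroup.of 0) = _
    rw [PresentedGroup.toGroup.of]
    simp
  have hψB : ψ (kB g) = betaP g (2 * (M : ZMod (g + 1)) + 1) (cK_sq g M hgM) := by
    rw [hψdef]
    show PresentedGroup.toGroup hfK (PresentedGroup.of 1) = _
    rw [PresentedGroup.toGroup.of]
    simp
  -- every nontrivial central involution of K equals kA ^ (g+1)
  have key : ∀ Z : KG g, (∀ w, Z * w = w * Z) → Z ^ 2 = 1 → Z ≠ 1 →
      Z = (kA g) ^ ((g + 1 : ℕ) : ℤ) := by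
    intro Z hZc hZ2 hZ1
    obtain ⟨i, j, hj, rfl⟩ := k_nf g Z
    have hA := kA_pow g
    have hB := kB_pow g
    have hABr := kAB g
    have hRr := kR g
    interval_cases j
    · -- j = 0
      rw [pow_zero, mul_one] at hZ2 hZ1 ⊢
      have h2i : (kA g) ^ (2 * i) = 1 := by
        rw [two_mul, zpow_add, ← pow_two]
        exact hZ2
      have hψ2 := congrArg (fun z => ψ z) h2i
      simp only [map_zpow, map_one, hψA] at hψ2
      have hpt := congrArg (fun f => f ((0, 0) : ZMod 2 × ZMod (g + 1))) hψ2
      simp only [Equiv.Perm.one_apply] at hpt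
      rw [alpha_even_zpow_apply] at hpt
      have hiz : ((i : ℤ) : ZMod (g + 1)) = 0 := by
        have h3 := congrArg Prod.snd hpt
        simpa using h3
      obtain ⟨t, ht⟩ := (ZMod.intCast_zmod_eq_zero_iff_dvd i (g + 1)).mp hiz
      subst ht
      have hsplit : (kA g) ^ (((g + 1 : ℕ) : ℤ) * t) = ((kA g) ^ ((g + 1 : ℕ) : ℤ)) ^ t :=
        zpow_mul _ _ _
      have hW2 : ((kA g) ^ ((g + 1 : ℕ) : ℤ)) ^ (2 : ℤ) = 1 := by
        rw [← zpow_mul]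
        have he : ((g + 1 : ℕ) : ℤ) * 2 = ((2 * g + 2 : ℕ) : ℤ) := by push_cast; ring
        rw [he, zpow_natCast]
        exact hA
      rcases Int.even_or_odd t with ⟨s, hs⟩ | ⟨s, hs⟩
      · exfalso
        apply hZ1
        rw [hsplit, show t = 2 * s from by omega, zpow_mul, hW2, one_zpow]
      · rw [hsplit, show t = 2 * s + 1 from by omega, zpow_add, zpow_mul, hW2,
          one_zpow, one_mul, zpow_one]
    · -- j = 1
      exfalso
      have hZcA := hZc (kA g)
      rw [pow_one] at hZcA
      have hcom : kB g * kA g = kA g * kB g := by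
        calc kB g * kA g = (kA g ^ i)⁻¹ * ((kA g ^ i * kB g) * kA g) := by group
          _ = (kA g ^ i)⁻¹ * (kA g * (kA g ^ i * kB g)) := by rw [hZcA]
          _ = kA g * kB g := by group
      have h2 : kA g * kB g = (kA g)⁻¹ * (kB g)⁻¹ := by
        rw [← hcom, lem_ba (kA g) (kB g) hABr]
      have h1 : kA g ^ 2 * kB g ^ 2 = 1 := by
        calc kA g ^ 2 * kB g ^ 2 = kA g * (kA g * kB g) * kB g := by
              rw [pow_two, pow_two]; group
          _ = kA g * ((kA g)⁻¹ * (kB g)⁻¹) * kB g := by rw [h2]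
          _ = 1 := by group
      have hψ1 := congrArg (fun z => ψ z) h1
      simp only [map_mul, map_pow, map_one, hψA, hψB] at hψ1
      have hpt := congrArg (fun f => f ((0, 0) : ZMod 2 × ZMod (g + 1))) hψ1
      simp only [Equiv.Perm.mul_apply, Equiv.Perm.one_apply] at hpt
      rw [beta_sq_apply, alpha_sq_apply] at hpt
      have h3 := congrArg Prod.snd hpt
      simp only [ep_zero, mul_zero, add_zero, zero_add] at h3
      exact one_ne_zero h3
    · -- j = 2
      exfalso
      have hZcA := hZc (kA g)
      have hcom : kB g ^ 2 * kA g = kA g * kB g ^ 2 := by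
        calc kB g ^ 2 * kA g = (kA g ^ i)⁻¹ * ((kA g ^ i * kB g ^ 2) * kA g) := by group
          _ = (kA g ^ i)⁻¹ * (kA g * (kA g ^ i * kB g ^ 2)) := by rw [hZcA]
          _ = kA g * kB g ^ 2 := by group
      have hc2 := lem_conjb2 g (kA g) (kB g) hB hRr
      have h3 : kA g ^ (g + 2) = kA g := by
        calc kA g ^ (g + 2) = kB g ^ 2 * kA g * (kB g ^ 2)⁻¹ := hc2.symm
          _ = (kA g * kB g ^ 2) * (kB g ^ 2)⁻¹ := by rw [hcom]
          _ = kA g := by group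
      have hg1 : kA g ^ (g + 1) = 1 := by
        have h4 : kA g ^ (g + 1) * kA g = 1 * kA g := by
          rw [one_mul, ← pow_succ]
          exact h3
        exact mul_right_cancel h4
      apply alpha_g1_ne g M hgM
      have h5 := congrArg (fun z => ψ z) hg1
      simpa [map_pow, hψA] using h5
    · -- j = 3
      exfalso
      have hZcA := hZc (kA g)
      have hcom : kB g ^ 3 * kA g = kA g * kB g ^ 3 := by
        calc kB g ^ 3 * kA g = (kA g ^ i)⁻¹ * ((kA g ^ i * kB g ^ 3) * kA g) := by group
          _ = (kA g ^ i)⁻¹ * (kA g * (kA g ^ i * kB g ^ 3)) := by rw [hZcA]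
          _ = kA g * kB g ^ 3 := by group
      have hval : kB g ^ 3 * kA g = (kA g ^ (g + 2))⁻¹ * kB g := by
        have hinv := lem_conjb2_inv g (kA g) (kB g) hB hRr
        calc kB g ^ 3 * kA g = kB g ^ 2 * (kB g * kA g) := by group
          _ = kB g ^ 2 * ((kA g)⁻¹ * (kB g)⁻¹) := by rw [lem_ba (kA g) (kB g) hABr]
          _ = (kB g ^ 2 * (kA g)⁻¹ * (kB g ^ 2)⁻¹) * (kB g ^ 2 * (kB g)⁻¹) := by group
          _ = (kA g ^ (g + 2))⁻¹ * (kB g ^ 2 * (kB g)⁻¹) := by rw [hinv]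
          _ = (kA g ^ (g + 2))⁻¹ * kB g := by group
      have h6 : (kA g ^ (g + 2))⁻¹ * kB g = kA g * kB g ^ 3 := by rw [← hval, hcom]
      have h5 : (kA g ^ (g + 3))⁻¹ = kB g ^ 2 := by
        calc (kA g ^ (g + 3))⁻¹ = (kA g ^ (g + 2) * kA g)⁻¹ := by rw [← pow_succ]
          _ = (kA g)⁻¹ * ((kA g ^ (g + 2))⁻¹ * kB g) * (kB g)⁻¹ := by group
          _ = (kA g)⁻¹ * (kA g * kB g ^ 3) * (kB g)⁻¹ := by rw [h6]
          _ = kB g ^ 2 := by group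
      have hψ5 := congrArg (fun z => ψ z) h5
      simp only [map_inv, map_pow, hψA, hψB] at hψ5
      have hpt' : ((alphaP g ^ (g + 3))⁻¹) ((0, 0) : ZMod 2 × ZMod (g + 1)) =
          ((0, 0) : ZMod 2 × ZMod (g + 1)) := by
        rw [hψ5, beta_sq_apply]
        simp [ep_zero]
      have hpt2 := congrArg (fun x => (alphaP g ^ (g + 3)) x) hpt'
      simp only [Equiv.Perm.inv_def, Equiv.apply_symm_apply] at hpt2
      have hpow3 : alphaP g ^ (g + 3) = alphaP g ^ (2 * (2 * M + 1)) := by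
        congr 1
        omega
      rw [hpow3, alpha_even_pow_apply] at hpt2
      have h7 := congrArg Prod.snd hpt2
      simp only [zero_add] at h7
      have h8 : ((2 * M + 1 : ℕ) : ZMod (g + 1)) = 0 := h7.symm
      have hd := (ZMod.natCast_eq_zero_iff _ _).mp h8
      have h9 := Nat.le_of_dvd (by omega) hd
      omega
  have hXW := key (θ ((amA g) ^ (g + 1))) hXc hX2 hX1
  have hYW := key (θ ((amB g) ^ 2)) hYc hY2 hY1
  exact hXY (hXW.trans hYW.symm)
end

section
/- Let a = (r₁r₂, 0) and b = (r₂, e₁) in the semidirect product D_{2g+2} ⋉ (ℤ/2)² (with r₁ acting trivially and r₂ by swapping coordinates). Then the subgroup generated by a and b has order 8g+8 and is isomorphic to the Accola-Maclachlan group AM_g. -/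
/-- The Klein four group `(ℤ/2)²`, written multiplicatively. -/
abbrev V2 : Type := Multiplicative (ZMod 2) × Multiplicative (ZMod 2)

/-- `e₁ = (1,0) ∈ (ℤ/2)²`. -/
def e₁ : V2 := (Multiplicative.ofAdd 1, 1)




lemma am_exists_rep {P : Type*} [Group P] {x y : P}
    (hy : y ^ (4:ℕ) = 1) (hxy : (x * y) ^ (2:ℕ) = 1) (hc : x * y ^ (2:ℕ) = y ^ (2:ℕ) * x)
    (z : P) (hz : z ∈ Subgroup.closure {x, y}) :
    ∃ i j : ℤ, z = x ^ i * y ^ j := by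
  have hyx : y * x = x⁻¹ * y⁻¹ := by
    have h : x * (y * x * y) = 1 := by
      have := hxy; rw [pow_two] at this; rw [← this]; group
    have h2 : y * x * y = x⁻¹ := by
      rw [← one_mul (y * x * y), ← inv_mul_cancel x, mul_assoc, h, mul_one]
    calc y * x = (y * x * y) * y⁻¹ := by group
      _ = x⁻¹ * y⁻¹ := by rw [h2]
  have hy2 : (y ^ (2:ℕ))⁻¹ = y ^ (2:ℕ) := by
    have h22 : y ^ (2:ℕ) * y ^ (2:ℕ) = 1 := by rw [← pow_add]; exact hy
    exact inv_eq_of_mul_eq_one_right h22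
  have hw : ∀ q : ℤ, (y ^ (2:ℕ)) ^ q = y ^ (2 * q) := by
    intro q; rw [← zpow_natCast y 2, ← zpow_mul]; norm_num
  have hconj : y * x * y⁻¹ = x⁻¹ * y ^ (2:ℕ) := by
    rw [hyx, ← hy2]; group
  have hcmp : Commute x (y ^ (2:ℕ)) := hc
  have hkey : ∀ k : ℤ, y * x ^ k = x ^ (-k) * (y ^ (2:ℕ)) ^ k * y := by
    intro k
    have h1 : y * x ^ k * y⁻¹ = (y * x * y⁻¹) ^ k := by
      have := map_zpow (MulAut.conj y) x k
      simpa [MulAut.conj_apply] using this.symm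
    have h2 : (x⁻¹ * y ^ (2:ℕ)) ^ k = x ^ (-k) * (y ^ (2:ℕ)) ^ k := by
      rw [(hcmp.inv_left).mul_zpow, inv_zpow, zpow_neg]
    calc y * x ^ k = (y * x ^ k * y⁻¹) * y := by group
      _ = x ^ (-k) * (y ^ (2:ℕ)) ^ k * y := by rw [h1, hconj, h2]
  have hswap : ∀ j k : ℤ, ∃ k' j' : ℤ, y ^ j * x ^ k = x ^ k' * y ^ j' := by
    intro j k
    rcases Int.even_or_odd j with ⟨q, hq⟩ | ⟨q, hq⟩
    · refine ⟨k, j, ?_⟩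
      have hcom : Commute (y ^ j) (x ^ k) := by
        have : y ^ j = (y ^ (2:ℕ)) ^ q := by
          rw [← zpow_natCast y 2, ← zpow_mul, hq]; ring_nf
        rw [this]
        exact (hcmp.symm.zpow_left q).zpow_right k
      rw [hcom.eq]
    · refine ⟨-k, 2 * q + 2 * k + 1, ?_⟩
      have hj : y ^ j = (y ^ (2:ℕ)) ^ q * y := by
        rw [hw, hq, zpow_add, zpow_one]
      have hq2 : Commute (x ^ (-k)) ((y ^ (2:ℕ)) ^ q) :=
        ((hcmp.zpow_left (-k)).zpow_right q)
      calc y ^ j * x ^ k = (y ^ (2:ℕ)) ^ q * (y * x ^ k) := by rw [hj, mul_assoc]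
        _ = (y ^ (2:ℕ)) ^ q * (x ^ (-k) * (y ^ (2:ℕ)) ^ k * y) := by rw [hkey]
        _ = x ^ (-k) * ((y ^ (2:ℕ)) ^ q * ((y ^ (2:ℕ)) ^ k * y)) := by
            rw [← mul_assoc, ← mul_assoc, ← hq2.eq]; group
        _ = x ^ (-k) * y ^ (2 * q + 2 * k + 1) := by
            congr 1
            rw [hw, hw, ← mul_assoc, ← zpow_add, ← zpow_add_one]
  refine Subgroup.closure_induction ?_ ⟨0, 0, by simp⟩ ?_ ?_ hz
  · rintro w (rfl | rfl)
    · exact ⟨1, 0, by simp⟩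
    · exact ⟨0, 1, by simp⟩
  · rintro z1 z2 _ _ ⟨i, j, rfl⟩ ⟨k, l, rfl⟩
    obtain ⟨k', j', h⟩ := hswap j k
    exact ⟨i + k', j' + l, by rw [zpow_add, zpow_add, mul_assoc, ← mul_assoc (y ^ j), h]; group⟩
  · rintro z1 _ ⟨i, j, rfl⟩
    obtain ⟨k', j', h⟩ := hswap (-j) (-i)
    exact ⟨k', j', by rw [← h]; group⟩

lemma am_zpow_reduce {P : Type*} [Group P] {x : P} {n : ℕ} (hn : 0 < n) (h : x ^ n = 1) (i : ℤ) :
    ∃ m : ℕ, m < n ∧ x ^ i = x ^ m := by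
  have h1 : i % (n:ℤ) < n := Int.emod_lt_of_pos i (by exact_mod_cast hn)
  have h0 : (0:ℤ) ≤ i % n := Int.emod_nonneg i (by exact_mod_cast hn.ne')
  refine ⟨(i % n).toNat, by omega, ?_⟩
  conv_lhs => rw [← Int.mul_ediv_add_emod i n]
  rw [zpow_add, zpow_mul, zpow_natCast, h, one_zpow, one_mul]
  conv_lhs => rw [show i % (n:ℤ) = ((i % (n:ℤ)).toNat : ℤ) from (Int.toNat_of_nonneg h0).symm]
  rw [zpow_natCast]

namespace AMaux

def e₂ : V2 := (1, Multiplicative.ofAdd 1)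
def v : V2 := (Multiplicative.ofAdd 1, Multiplicative.ofAdd 1)

lemma d1 : ¬ (1 : V2) = e₁ := by decide
lemma d2 : ¬ (1 : V2) = v := by decide
lemma d3 : ¬ (1 : V2) = e₂ := by decide
lemma d4 : ¬ e₁ = (1 : V2) := by decide
lemma d5 : ¬ e₁ = v := by decide
lemma d6 : ¬ e₁ = e₂ := by decide
lemma d7 : ¬ v = (1 : V2) := by decide
lemma d8 : ¬ v = e₁ := by decide
lemma d9 : ¬ v = e₂ := by decide
lemma d10 : ¬ e₂ = (1 : V2) := by decide
lemma d11 : ¬ e₂ = e₁ := by decide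
lemma d12 : ¬ e₂ = v := by decide

variable {g : ℕ} (φ : DihedralGroup (2 * g + 2) →* MulAut V2)

def A : V2 ⋊[φ] DihedralGroup (2 * g + 2) := ⟨1, .r 1⟩
def B : V2 ⋊[φ] DihedralGroup (2 * g + 2) := ⟨e₁, .sr 1⟩

lemma A_pow (k : ℕ) : (A φ) ^ k = ⟨1, .r (k : ZMod (2 * g + 2))⟩ := by
  induction k with
  | zero => apply SemidirectProduct.ext <;> simp [-DihedralGroup.r_zero, DihedralGroup.one_def]
  | succ n ih =>
    rw [pow_succ, ih]
    apply SemidirectProduct.ext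
    · simp [A]
    · simp only [A, SemidirectProduct.mul_right, DihedralGroup.r_mul_r]
      norm_num

lemma rA : (A φ) ^ (2 * g + 2) = 1 := by
  rw [A_pow]
  apply SemidirectProduct.ext
  · simp
  · simp [ZMod.natCast_self, -DihedralGroup.r_zero, DihedralGroup.one_def]

lemma B0 : (B φ) ^ (0 : ℕ) = ⟨1, 1⟩ := by apply SemidirectProduct.ext <;> simp

lemma B1 : (B φ) ^ (1 : ℕ) = ⟨e₁, .sr 1⟩ := by rw [pow_one]; rfl

variable (h0 : φ (.sr 0) = 1) (h1 : φ (.sr 1) = (MulEquiv.prodComm : V2 ≃* V2))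

include h0 h1

lemma phi_r1 : φ (.r 1) = (MulEquiv.prodComm : V2 ≃* V2) := by
  have h : (DihedralGroup.r 1 : DihedralGroup (2 * g + 2)) = .sr 0 * .sr 1 := by
    rw [DihedralGroup.sr_mul_sr]; norm_num
  rw [h, map_mul, h0, h1, one_mul]

lemma B2 : (B φ) ^ (2 : ℕ) = ⟨v, 1⟩ := by
  rw [pow_two]
  apply SemidirectProduct.ext
  · simp only [B, SemidirectProduct.mul_left, h1]
    decide
  · simp only [B, SemidirectProduct.mul_right, DihedralGroup.sr_mul_sr]
    simp [-DihedralGroup.r_zero, DihedralGroup.one_def]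

lemma B3 : (B φ) ^ (3 : ℕ) = ⟨e₂, .sr 1⟩ := by
  have h3 : (3:ℕ) = 2 + 1 := rfl
  rw [h3, pow_add, B2 φ h0 h1, pow_one]
  apply SemidirectProduct.ext
  · simp only [B, SemidirectProduct.mul_left, map_one, MulAut.one_apply]
    decide
  · simp [B]

lemma rB : (B φ) ^ (4 : ℕ) = 1 := by
  have h4 : (4:ℕ) = 2 + 2 := rfl
  rw [h4, pow_add, B2 φ h0 h1]
  apply SemidirectProduct.ext
  · simp only [SemidirectProduct.mul_left, map_one, MulAut.one_apply,
      SemidirectProduct.one_left]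
    decide
  · simp

lemma rAB : (A φ * B φ) ^ (2 : ℕ) = 1 := by
  have hAB : A φ * B φ = ⟨e₂, .sr 0⟩ := by
    apply SemidirectProduct.ext
    · simp only [A, B, SemidirectProduct.mul_left, phi_r1 φ h0 h1, one_mul]
      decide
    · simp [A, B, DihedralGroup.r_mul_sr]
  rw [hAB, pow_two]
  apply SemidirectProduct.ext
  · simp only [SemidirectProduct.mul_left, h0, MulAut.one_apply,
      SemidirectProduct.one_left, id_eq]
    decide
  · simp only [SemidirectProduct.mul_right, DihedralGroup.sr_mul_sr,
      SemidirectProduct.one_right]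
    simp [-DihedralGroup.r_zero, DihedralGroup.one_def]

lemma commG : A φ * (B φ) ^ (2:ℕ) = (B φ) ^ (2:ℕ) * A φ := by
  rw [B2 φ h0 h1]
  apply SemidirectProduct.ext
  · simp only [A, SemidirectProduct.mul_left, phi_r1 φ h0 h1, map_one,
      MulAut.one_apply, one_mul]
    decide
  · simp [A]

lemma rComm : (A φ)⁻¹ * ((B φ) ^ (2:ℕ))⁻¹ * (A φ) * (B φ) ^ (2:ℕ) = 1 := by
  calc (A φ)⁻¹ * ((B φ) ^ (2:ℕ))⁻¹ * (A φ) * (B φ) ^ (2:ℕ)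
      = (A φ)⁻¹ * (((B φ) ^ (2:ℕ))⁻¹ * ((A φ) * (B φ) ^ (2:ℕ))) := by group
    _ = (A φ)⁻¹ * (((B φ) ^ (2:ℕ))⁻¹ * ((B φ) ^ (2:ℕ) * (A φ))) := by rw [commG φ h0 h1]
    _ = 1 := by group


set_option maxHeartbeats 1000000 in
lemma am_inj (i k : Fin (2 * g + 2)) (j l : ℕ) (hj : j < 4) (hl : l < 4)
    (h : (A φ) ^ (i : ℕ) * (B φ) ^ j = (A φ) ^ (k : ℕ) * (B φ) ^ l) : (i : ℕ) = k ∧ j = l := by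
  haveI : NeZero (2 * g + 2) := ⟨by omega⟩
  have hcast : (((i:ℕ) : ZMod (2 * g + 2)) = ((k:ℕ) : ZMod (2 * g + 2))) → (i : ℕ) = (k : ℕ) := by
    intro hik
    have h2 := congrArg ZMod.val hik
    rwa [ZMod.val_cast_of_lt i.isLt, ZMod.val_cast_of_lt k.isLt] at h2
  interval_cases j <;> interval_cases l <;>
    simp only [B0, B1 φ, B2 φ h0 h1, B3 φ h0 h1, A_pow φ] at h <;>
    (have hR := congrArg SemidirectProduct.right h;
     simp only [SemidirectProduct.mul_right, DihedralGroup.r_mul_r,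
       DihedralGroup.r_mul_sr, mul_one] at hR) <;>
    first
    | exact ⟨hcast (by simpa using hR), rfl⟩
    | (have hik := hcast (by simpa using hR)
       rw [hik] at h
       have hL := congrArg SemidirectProduct.left (mul_left_cancel h)
       exact absurd hL (by first
         | exact d1 | exact d2 | exact d3 | exact d4 | exact d5 | exact d6
         | exact d7 | exact d8 | exact d9 | exact d10 | exact d11 | exact d12))

end AMaux


/-- In the semidirect product `D_{2g+2} ⋉ (ℤ/2)²` (with `r₁ = sr 0` acting trivially
and `r₂ = sr 1` swapping the coordinates), the subgroup generated by
`a = (r₁r₂, 0)` and `b = (r₂, e₁)` has order `8g + 8` and is isomorphic to the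
Accola–Maclachlan group `AM_g`. -/
theorem am_subgroup_of_semidirect (g : ℕ) (hg : 2 ≤ g)
    (φ : DihedralGroup (2 * g + 2) →* MulAut V2)
    (h0 : φ (DihedralGroup.sr 0) = 1)
    (h1 : φ (DihedralGroup.sr 1) = (MulEquiv.prodComm : V2 ≃* V2)) :
    let a : V2 ⋊[φ] DihedralGroup (2 * g + 2) := ⟨1, DihedralGroup.r 1⟩
    let b : V2 ⋊[φ] DihedralGroup (2 * g + 2) := ⟨e₁, DihedralGroup.sr 1⟩
    Nat.card (Subgroup.closure {a, b}) = 8 * g + 8 ∧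
      Nonempty ((Subgroup.closure {a, b}) ≃* PresentedGroup (amRels g)) := by
  intro a b
  show Nat.card (Subgroup.closure {AMaux.A φ, AMaux.B φ}) = 8 * g + 8 ∧
      Nonempty ((Subgroup.closure {AMaux.A φ, AMaux.B φ}) ≃* PresentedGroup (amRels g))
  haveI : NeZero (2 * g + 2) := ⟨by omega⟩
  set P := PresentedGroup (amRels g) with hP
  set X : P := PresentedGroup.of 0 with hX
  set Y : P := PresentedGroup.of 1 with hY
  -- relations in P
  have relone : ∀ w ∈ amRels g, PresentedGroup.mk (amRels g) w = 1 := fun w hw =>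
    (QuotientGroup.eq_one_iff _).mpr (Subgroup.subset_normalClosure hw)
  have hXrel : X ^ (2 * g + 2) = 1 := by
    have hm : ((FreeGroup.of 0 : FreeGroup (Fin 2))) ^ (2 * g + 2) ∈ amRels g := Or.inl rfl
    have := relone _ hm
    rwa [map_pow] at this
  have hYrel : Y ^ (4 : ℕ) = 1 := by
    have hm : ((FreeGroup.of 1 : FreeGroup (Fin 2))) ^ (4 : ℕ) ∈ amRels g :=
      Or.inr (Or.inl rfl)
    have := relone _ hm
    rwa [map_pow] at this
  have hXYrel : (X * Y) ^ (2 : ℕ) = 1 := by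
    have hm : ((FreeGroup.of 0 * FreeGroup.of 1 : FreeGroup (Fin 2))) ^ (2 : ℕ) ∈ amRels g :=
      Or.inr (Or.inr (Or.inl rfl))
    have := relone _ hm
    rwa [map_pow, map_mul] at this
  have hCrel : X * Y ^ (2:ℕ) = Y ^ (2:ℕ) * X := by
    have hm : ((FreeGroup.of 0)⁻¹ * ((FreeGroup.of 1 : FreeGroup (Fin 2)) ^ 2)⁻¹ *
        FreeGroup.of 0 * (FreeGroup.of 1) ^ 2) ∈ amRels g := Or.inr (Or.inr (Or.inr rfl))
    have h := relone _ hm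
    rw [map_mul, map_mul, map_mul, map_inv, map_inv, map_pow] at h
    have h' : X⁻¹ * (Y ^ (2:ℕ))⁻¹ * X * Y ^ (2:ℕ) = 1 := h
    calc X * Y ^ (2:ℕ) = (Y ^ (2:ℕ) * X) * (X⁻¹ * (Y ^ (2:ℕ))⁻¹ * X * Y ^ (2:ℕ)) := by group
      _ = Y ^ (2:ℕ) * X := by rw [h', mul_one]
  -- closure of X Y is everything
  have htop : ∀ z : P, z ∈ Subgroup.closure ({X, Y} : Set P) := by
    intro z
    refine PresentedGroup.generated_by _ _ (fun j => ?_) z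
    fin_cases j
    · exact Subgroup.subset_closure (Or.inl rfl)
    · exact Subgroup.subset_closure (Or.inr rfl)
  have hrep : ∀ z : P, ∃ i j : ℤ, z = X ^ i * Y ^ j := fun z =>
    am_exists_rep hYrel hXYrel hCrel z (htop z)
  -- surjection from a finite type onto P
  set σ : Fin (2 * g + 2) × Fin 4 → P := fun p => X ^ (p.1 : ℕ) * Y ^ (p.2 : ℕ) with hσdef
  have hσ : Function.Surjective σ := by
    intro z
    obtain ⟨i, j, rfl⟩ := hrep z
    obtain ⟨m, hm, hxm⟩ := am_zpow_reduce (n := 2 * g + 2) (by omega) hXrel i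
    obtain ⟨m2, hm2, hym⟩ := am_zpow_reduce (n := 4) (by omega) hYrel j
    exact ⟨(⟨m, hm⟩, ⟨m2, hm2⟩), by simp only [hσdef]; rw [← hxm, ← hym]⟩
  haveI hPfin : Finite P := Finite.of_surjective σ hσ
  have hcardP : Nat.card P ≤ 8 * g + 8 := by
    have h := Nat.card_le_card_of_surjective σ hσ
    have h2 : Nat.card (Fin (2 * g + 2) × Fin 4) = (2 * g + 2) * 4 := by
      simp [Nat.card_eq_fintype_card]
    omega
  -- the homomorphism P →* G
  set fab : Fin 2 → (V2 ⋊[φ] DihedralGroup (2 * g + 2)) := ![AMaux.A φ, AMaux.B φ] with hfab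
  have hrels : ∀ w ∈ amRels g, FreeGroup.lift fab w = 1 := by
    rintro w (rfl | rfl | rfl | rfl)
    · rw [map_pow, FreeGroup.lift_apply_of]
      exact AMaux.rA φ
    · rw [map_pow, FreeGroup.lift_apply_of]
      exact AMaux.rB φ h0 h1
    · rw [map_pow, map_mul, FreeGroup.lift_apply_of, FreeGroup.lift_apply_of]
      exact AMaux.rAB φ h0 h1
    · rw [map_mul, map_mul, map_mul, map_inv, map_inv, map_pow, FreeGroup.lift_apply_of,
        FreeGroup.lift_apply_of]
      exact AMaux.rComm φ h0 h1
  set f : P →* (V2 ⋊[φ] DihedralGroup (2 * g + 2)) := PresentedGroup.toGroup hrels with hf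
  have hfX : f (PresentedGroup.of 0) = AMaux.A φ := PresentedGroup.toGroup.of hrels
  have hfY : f (PresentedGroup.of 1) = AMaux.B φ := PresentedGroup.toGroup.of hrels
  have hrange : f.range = Subgroup.closure {AMaux.A φ, AMaux.B φ} := by
    rw [MonoidHom.range_eq_map, ← PresentedGroup.closure_range_of (amRels g),
      MonoidHom.map_closure]
    congr 1
    rw [← Set.range_comp]
    ext z
    simp only [Set.mem_range, Function.comp_apply, Fin.exists_fin_two, hfX, hfY,
      Set.mem_insert_iff, Set.mem_singleton_iff]
    constructor
    · rintro (h | h)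
      · exact Or.inl h.symm
      · exact Or.inr h.symm
    · rintro (h | h)
      · exact Or.inl h.symm
      · exact Or.inr h.symm
  -- injectivity count on the G side
  haveI hGfin : Finite (V2 ⋊[φ] DihedralGroup (2 * g + 2)) := by
    apply Finite.of_injective (fun x => (x.left, x.right))
    intro x y h
    exact SemidirectProduct.ext (congrArg Prod.fst h) (congrArg Prod.snd h)
  have hAmem : AMaux.A φ ∈ Subgroup.closure {AMaux.A φ, AMaux.B φ} :=
    Subgroup.subset_closure (Or.inl rfl)
  have hBmem : AMaux.B φ ∈ Subgroup.closure {AMaux.A φ, AMaux.B φ} :=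
    Subgroup.subset_closure (Or.inr rfl)
  set τ : Fin (2 * g + 2) × Fin 4 → Subgroup.closure {AMaux.A φ, AMaux.B φ} := fun p =>
    ⟨(AMaux.A φ) ^ (p.1 : ℕ) * (AMaux.B φ) ^ (p.2 : ℕ),
      mul_mem (pow_mem hAmem _) (pow_mem hBmem _)⟩ with hτdef
  have hτ : Function.Injective τ := by
    rintro ⟨i, j⟩ ⟨k, l⟩ h
    have h' : (AMaux.A φ) ^ (i : ℕ) * (AMaux.B φ) ^ (j : ℕ) =
        (AMaux.A φ) ^ (k : ℕ) * (AMaux.B φ) ^ (l : ℕ) := congrArg Subtype.val h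
    obtain ⟨h1', h2'⟩ := AMaux.am_inj φ h0 h1 i k j l j.isLt l.isLt h'
    exact Prod.ext (Fin.ext h1') (Fin.ext h2')
  have hge : 8 * g + 8 ≤ Nat.card (Subgroup.closure {AMaux.A φ, AMaux.B φ}) := by
    have h := Nat.card_le_card_of_injective τ hτ
    have h2 : Nat.card (Fin (2 * g + 2) × Fin 4) = (2 * g + 2) * 4 := by
      simp [Nat.card_eq_fintype_card]
    omega
  -- assemble
  set f' : P →* Subgroup.closure {AMaux.A φ, AMaux.B φ} :=
    (MulEquiv.subgroupCongr hrange).toMonoidHom.comp f.rangeRestrict with hf'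
  have hsurj' : Function.Surjective f' := by
    intro z
    obtain ⟨w, hw⟩ := f.rangeRestrict_surjective ((MulEquiv.subgroupCongr hrange).symm z)
    refine ⟨w, ?_⟩
    simp only [hf', MonoidHom.comp_apply, MulEquiv.coe_toMonoidHom, hw,
      MulEquiv.apply_symm_apply]
  have hle : Nat.card (Subgroup.closure {AMaux.A φ, AMaux.B φ}) ≤ Nat.card P :=
    Nat.card_le_card_of_surjective f' hsurj'
  have hcardH : Nat.card (Subgroup.closure {AMaux.A φ, AMaux.B φ}) = 8 * g + 8 := by omega
  have hcardPeq : Nat.card P = 8 * g + 8 := by omega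
  refine ⟨hcardH, ?_⟩
  have hbij : Function.Bijective f' :=
    (Nat.bijective_iff_surjective_and_card f').mpr ⟨hsurj', by rw [hcardPeq, hcardH]⟩
  exact ⟨(MulEquiv.ofBijective f' hbij).symm⟩
end

section
/- Consider D_{4g} ⋉ (ℤ/2)² (r₁ trivial action, r₂ swapping) and the central involution c = ((r₁r₂)^{2g}, e₁+e₂). There exists an element φ = (s, v) with φ² = c and s = (r₁r₂)^{±g} if and only if g is odd. -/
/-- `e₁ + e₂ = (1,1) ∈ (ℤ/2)²`. -/
def e₁e₂ : V2 := (Multiplicative.ofAdd 1, Multiplicative.ofAdd 1)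

lemma V2.sq (v : V2) : v * v = 1 := by
  revert v; decide

lemma phi_r_one (g : ℕ) (φ : DihedralGroup (4 * g) →* MulAut V2)
    (h0 : φ (DihedralGroup.sr 0) = 1)
    (h1 : φ (DihedralGroup.sr 1) = (MulEquiv.prodComm : V2 ≃* V2)) :
    φ (DihedralGroup.r 1) = (MulEquiv.prodComm : V2 ≃* V2) := by
  have : (DihedralGroup.sr 0 : DihedralGroup (4*g)) * DihedralGroup.sr 1 = DihedralGroup.r 1 := by
    simp [DihedralGroup.sr_mul_sr]
  rw [← this, map_mul, h0, h1, one_mul]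

lemma phi_r_nat (g : ℕ) (φ : DihedralGroup (4 * g) →* MulAut V2)
    (h0 : φ (DihedralGroup.sr 0) = 1)
    (h1 : φ (DihedralGroup.sr 1) = (MulEquiv.prodComm : V2 ≃* V2)) (m : ℕ) :
    φ (DihedralGroup.r ((m : ℕ) : ZMod (4 * g))) =
      ((MulEquiv.prodComm : V2 ≃* V2) : MulAut V2) ^ m := by
  induction m with
  | zero =>
      have : ((0 : ℕ) : ZMod (4*g)) = 0 := by push_cast; ring
      rw [this, ← DihedralGroup.one_def, map_one, pow_zero]
  | succ n ih =>
      have : ((n+1 : ℕ) : ZMod (4*g)) = (n : ZMod (4*g)) + 1 := by push_cast; ring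
      rw [this, ← DihedralGroup.r_mul_r, map_mul, ih, phi_r_one g φ h0 h1, pow_succ]

/-- In `D_{4g} ⋉ (ℤ/2)²` (with `r₁ = sr 0` acting trivially and `r₂ = sr 1` swapping
the coordinates), consider the central involution `c = ((r₁r₂)^(2g), e₁ + e₂)`.
There exists an element `φ' = (s, v)` with `s = (r₁r₂)^(±g)` and `φ'² = c`
if and only if `g` is odd. -/
theorem wiman_square_root_iff_odd (g : ℕ) (hg : 3 ≤ g)
    (φ : DihedralGroup (4 * g) →* MulAut V2)
    (h0 : φ (DihedralGroup.sr 0) = 1)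
    (h1 : φ (DihedralGroup.sr 1) = (MulEquiv.prodComm : V2 ≃* V2)) :
    let c : V2 ⋊[φ] DihedralGroup (4 * g) :=
      ⟨e₁e₂, DihedralGroup.r ((2 * g : ℕ) : ZMod (4 * g))⟩
    (∃ x : V2 ⋊[φ] DihedralGroup (4 * g),
        (x.right = DihedralGroup.r ((g : ℕ) : ZMod (4 * g)) ∨
          x.right = DihedralGroup.r (-((g : ℕ) : ZMod (4 * g)))) ∧
        x * x = c) ↔ Odd g := by
  intro c
  have hsw : ((MulEquiv.prodComm : V2 ≃* V2) : MulAut V2) ^ 2 = 1 := by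
    ext v <;> rfl
  constructor
  · rintro ⟨x, hs, hsq⟩
    by_contra hodd
    rw [Nat.not_odd_iff_even] at hodd
    -- x.right acts trivially
    have hact : φ x.right = 1 := by
      rcases hs with h | h
      · rw [h, phi_r_nat g φ h0 h1 g]
        obtain ⟨k, hk⟩ := hodd
        rw [hk, ← two_mul, pow_mul, hsw, one_pow]
      · have : -((g : ℕ) : ZMod (4 * g)) = ((3 * g : ℕ) : ZMod (4 * g)) := by
          have : ((4 * g : ℕ) : ZMod (4 * g)) = 0 := by
            exact_mod_cast ZMod.natCast_self (4*g)
          push_cast at this ⊢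
          linear_combination -this
        rw [h, this, phi_r_nat g φ h0 h1 (3*g)]
        obtain ⟨k, hk⟩ := hodd
        rw [hk]
        have : 3 * (k + k) = 2 * (3 * k) := by ring
        rw [this, pow_mul, hsw, one_pow]
    have hleft : (x * x).left = c.left := by rw [hsq]
    rw [SemidirectProduct.mul_left, hact] at hleft
    simp only [MulAut.one_apply] at hleft
    rw [V2.sq] at hleft
    exact absurd hleft.symm (by show ¬ (e₁e₂ = 1); decide)
  · intro hodd
    refine ⟨⟨((1 : Multiplicative (ZMod 2)), Multiplicative.ofAdd 1),
      DihedralGroup.r ((g : ℕ) : ZMod (4 * g))⟩, Or.inl rfl, ?_⟩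
    have hact : φ (DihedralGroup.r ((g : ℕ) : ZMod (4 * g))) =
        ((MulEquiv.prodComm : V2 ≃* V2) : MulAut V2) := by
      rw [phi_r_nat g φ h0 h1 g]
      obtain ⟨k, hk⟩ := hodd
      rw [hk, pow_succ, pow_mul, hsw, one_pow, one_mul]
    have hl : ∀ a b : V2 ⋊[φ] DihedralGroup (4*g), a.left = b.left → a.right = b.right → a = b := by
      rintro ⟨a1,a2⟩ ⟨b1,b2⟩ h h'
      cases h; cases h'; rfl
    apply hl
    · rw [SemidirectProduct.mul_left, hact]
      show ((1 : Multiplicative (ZMod 2)), Multiplicative.ofAdd (1 : ZMod 2)) *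
        (MulEquiv.prodComm : V2 ≃* V2)
          ((1 : Multiplicative (ZMod 2)), Multiplicative.ofAdd (1 : ZMod 2)) = e₁e₂
      decide
    · rw [SemidirectProduct.mul_right, DihedralGroup.r_mul_r]
      show DihedralGroup.r _ = DihedralGroup.r _
      congr 1
      push_cast
      ring
end

section
/- Let G = D_{2g+2} ⋉ (ℤ/2)³ with the action Φ given by Φ(r₁) = [[1,1,0],[0,1,0],[0,1,1]] and Φ(r₂) = [[0,1,1],[1,0,1],[0,0,1]] over 𝔽₂, for g ≡ 3 (mod 4). Then d = ((r₁r₂)^{g+1}, e₁+e₃) is a central involution of the subgroup generated by x = (r₁, e₁) and z = (r₂, e₁). -/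
/-- The matrix `Φ(r₁)` over `𝔽₂`. -/
def M1 : Matrix (Fin 3) (Fin 3) (ZMod 2) := !![1,1,0; 0,1,0; 0,1,1]

/-- The matrix `Φ(r₂)` over `𝔽₂`. -/
def M2 : Matrix (Fin 3) (Fin 3) (ZMod 2) := !![0,1,1; 1,0,1; 0,0,1]

/-- `(ℤ/2)³`, written multiplicatively. -/
abbrev V3 : Type := Multiplicative (Fin 3 → ZMod 2)

lemma A_pow_four : (M1 * M2) ^ 4 = 1 := by
  rw [M1, M2]; decide

/-- Let `G = D_{2g+2} ⋉ (ℤ/2)³`, `g ≡ 3 (mod 4)`, with the action `Φ` given on the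
generating reflections `r₁ = sr 0`, `r₂ = sr 1` by the matrices `M1` and `M2` over
`𝔽₂`.  Then `d = ((r₁r₂)^(g+1), e₁+e₃)` is a central involution of the subgroup
generated by `x = (r₁, e₁)` and `z = (r₂, e₁)`: `d² = 1` and `d` commutes with `x`
and `z`. -/
theorem kulkarni_central_involution (g : ℕ) (hg : g % 4 = 3)
    (φ : DihedralGroup (2 * g + 2) →* MulAut V3)
    (h1 : ∀ v : Fin 3 → ZMod 2,
      φ (DihedralGroup.sr 0) (Multiplicative.ofAdd v) = Multiplicative.ofAdd (M1.mulVec v))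
    (h2 : ∀ v : Fin 3 → ZMod 2,
      φ (DihedralGroup.sr 1) (Multiplicative.ofAdd v) = Multiplicative.ofAdd (M2.mulVec v)) :
    let d : V3 ⋊[φ] DihedralGroup (2 * g + 2) :=
      ⟨Multiplicative.ofAdd ![1, 0, 1], DihedralGroup.r ((g + 1 : ℕ) : ZMod (2 * g + 2))⟩
    let x : V3 ⋊[φ] DihedralGroup (2 * g + 2) :=
      ⟨Multiplicative.ofAdd ![1, 0, 0], DihedralGroup.sr 0⟩
    let z : V3 ⋊[φ] DihedralGroup (2 * g + 2) :=
      ⟨Multiplicative.ofAdd ![1, 0, 0], DihedralGroup.sr 1⟩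
    d * d = 1 ∧ d * x = x * d ∧ d * z = z * d := by
  intro d x z
  -- action of r 1
  have hr1 : ∀ v : Fin 3 → ZMod 2,
      φ (DihedralGroup.r 1) (Multiplicative.ofAdd v)
        = Multiplicative.ofAdd ((M1 * M2).mulVec v) := by
    intro v
    have : (DihedralGroup.r 1 : DihedralGroup (2 * g + 2))
        = DihedralGroup.sr 0 * DihedralGroup.sr 1 := by
      rw [DihedralGroup.sr_mul_sr]; norm_num
    rw [this, map_mul, MulAut.mul_apply, h2, h1, Matrix.mulVec_mulVec]
  -- action of r n
  have hrn : ∀ (n : ℕ) (v : Fin 3 → ZMod 2),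
      φ (DihedralGroup.r (n : ZMod (2 * g + 2))) (Multiplicative.ofAdd v)
        = Multiplicative.ofAdd (((M1 * M2) ^ n).mulVec v) := by
    intro n
    induction n with
    | zero =>
        intro v
        simp [← DihedralGroup.one_def, Matrix.one_mulVec]
    | succ k ih =>
        intro v
        have : (DihedralGroup.r ((k + 1 : ℕ) : ZMod (2 * g + 2)))
            = DihedralGroup.r (k : ZMod (2 * g + 2)) * DihedralGroup.r 1 := by
          rw [DihedralGroup.r_mul_r]; push_cast; ring_nf
        rw [this, map_mul, MulAut.mul_apply, hr1, ih, Matrix.mulVec_mulVec,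
          pow_succ]
  -- 4 ∣ g + 1 hence the matrix power is 1
  obtain ⟨k, hk⟩ : ∃ k, g + 1 = 4 * k := ⟨(g + 1) / 4, by omega⟩
  have hApow : (M1 * M2) ^ (g + 1) = 1 := by
    rw [hk, pow_mul, A_pow_four, one_pow]
  have hrg : ∀ v : Fin 3 → ZMod 2,
      φ (DihedralGroup.r ((g + 1 : ℕ) : ZMod (2 * g + 2))) (Multiplicative.ofAdd v)
        = Multiplicative.ofAdd v := by
    intro v
    rw [hrn (g + 1) v, hApow, Matrix.one_mulVec]
  -- key ZMod fact: (g+1) + (g+1) = 0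
  have hzero : ((g + 1 : ℕ) : ZMod (2 * g + 2)) + ((g + 1 : ℕ) : ZMod (2 * g + 2)) = 0 := by
    rw [← Nat.cast_add]
    have : (g + 1) + (g + 1) = 2 * g + 2 := by ring
    rw [this, ZMod.natCast_self]
  have hneg : -((g + 1 : ℕ) : ZMod (2 * g + 2)) = ((g + 1 : ℕ) : ZMod (2 * g + 2)) := by
    rw [neg_eq_iff_add_eq_zero, hzero]
  -- M1 and M2 fix the vector ![1,0,1]
  have hM1v : M1.mulVec ![1, 0, 1] = ![1, 0, 1] := by rw [M1]; decide
  have hM2v : M2.mulVec ![1, 0, 1] = ![1, 0, 1] := by rw [M2]; decide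
  refine ⟨?_, ?_, ?_⟩
  · apply SemidirectProduct.ext
    · show (Multiplicative.ofAdd ![1, 0, 1]) *
        φ (DihedralGroup.r ((g + 1 : ℕ) : ZMod (2 * g + 2))) (Multiplicative.ofAdd ![1, 0, 1])
          = (1 : V3)
      rw [hrg, ← ofAdd_add]
      show Multiplicative.ofAdd (![1, 0, 1] + ![1, 0, 1]) = Multiplicative.ofAdd 0
      congr 1
      decide
    · show DihedralGroup.r ((g + 1 : ℕ) : ZMod (2 * g + 2)) *
        DihedralGroup.r ((g + 1 : ℕ) : ZMod (2 * g + 2)) = 1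
      rw [DihedralGroup.r_mul_r, hzero, ← DihedralGroup.one_def]
  · apply SemidirectProduct.ext
    · show (Multiplicative.ofAdd ![1, 0, 1]) *
        φ (DihedralGroup.r ((g + 1 : ℕ) : ZMod (2 * g + 2))) (Multiplicative.ofAdd ![1, 0, 0])
          = (Multiplicative.ofAdd ![1, 0, 0]) *
            φ (DihedralGroup.sr 0) (Multiplicative.ofAdd ![1, 0, 1])
      rw [hrg, h1, hM1v, ← ofAdd_add, ← ofAdd_add]
      congr 1
      decide
    · show DihedralGroup.r ((g + 1 : ℕ) : ZMod (2 * g + 2)) * DihedralGroup.sr 0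
          = DihedralGroup.sr 0 * DihedralGroup.r ((g + 1 : ℕ) : ZMod (2 * g + 2))
      rw [DihedralGroup.r_mul_sr, DihedralGroup.sr_mul_r, zero_sub, zero_add, hneg]
  · apply SemidirectProduct.ext
    · show (Multiplicative.ofAdd ![1, 0, 1]) *
        φ (DihedralGroup.r ((g + 1 : ℕ) : ZMod (2 * g + 2))) (Multiplicative.ofAdd ![1, 0, 0])
          = (Multiplicative.ofAdd ![1, 0, 0]) *
            φ (DihedralGroup.sr 1) (Multiplicative.ofAdd ![1, 0, 1])
      rw [hrg, h2, hM2v, ← ofAdd_add, ← ofAdd_add]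
      congr 1
      decide
    · show DihedralGroup.r ((g + 1 : ℕ) : ZMod (2 * g + 2)) * DihedralGroup.sr 1
          = DihedralGroup.sr 1 * DihedralGroup.r ((g + 1 : ℕ) : ZMod (2 * g + 2))
      rw [DihedralGroup.r_mul_sr, DihedralGroup.sr_mul_r, sub_eq_add_neg, hneg]
end

section
/- With G = D_{2g+2} ⋉ (ℤ/2)³ as above (g ≡ 3 mod 4), a = (r₁r₂, 0) and b = (r₂, e₂), the relation b² a b² = a^{g+2} d holds, where d = ((r₁r₂)^{g+1}, e₁+e₃); consequently the quotient ⟨a,b,d⟩/⟨d⟩ satisfies the Kulkarni relations a^{2g+2} = b⁴ = (ab)² = 1 and b² a b² = a^{g+2}. -/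
set_option maxHeartbeats 1000000
set_option linter.unusedVariables false

open DihedralGroup SemidirectProduct


/-- Let `G = D_{2g+2} ⋉ (ℤ/2)³` (action on the reflections `r₁ = sr 0`, `r₂ = sr 1`
given by the matrices `M1`, `M2` over `𝔽₂`), `g ≡ 3 (mod 4)`,
`a = (r₁r₂, 0)`, `b = (r₂, e₂)` and `d = ((r₁r₂)^(g+1), e₁+e₃)`.  Then
`a^(2g+2) = b⁴ = (ab)² = 1` and `b² a b² = a^(g+2) d` hold in `G`; consequently, in
the quotient of `⟨a, b, d⟩` by the normal subgroup generated by `d`, the Kulkarni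
relations `a^(2g+2) = b⁴ = (ab)² = 1` and `b² a b² = a^(g+2)` hold. -/
theorem kulkarni_relations (g : ℕ) (hg : g % 4 = 3)
    (φ : DihedralGroup (2 * g + 2) →* MulAut V3)
    (h1 : ∀ v : Fin 3 → ZMod 2,
      φ (DihedralGroup.sr 0) (Multiplicative.ofAdd v) = Multiplicative.ofAdd (M1.mulVec v))
    (h2 : ∀ v : Fin 3 → ZMod 2,
      φ (DihedralGroup.sr 1) (Multiplicative.ofAdd v) = Multiplicative.ofAdd (M2.mulVec v)) :
    let a : V3 ⋊[φ] DihedralGroup (2 * g + 2) := ⟨1, DihedralGroup.r 1⟩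
    let b : V3 ⋊[φ] DihedralGroup (2 * g + 2) :=
      ⟨Multiplicative.ofAdd ![0, 1, 0], DihedralGroup.sr 1⟩
    let d : V3 ⋊[φ] DihedralGroup (2 * g + 2) :=
      ⟨Multiplicative.ofAdd ![1, 0, 1], DihedralGroup.r ((g + 1 : ℕ) : ZMod (2 * g + 2))⟩
    a ^ (2 * g + 2) = 1 ∧ b ^ 4 = 1 ∧ (a * b) ^ 2 = 1 ∧
      b ^ 2 * a * b ^ 2 = a ^ (g + 2) * d ∧
      (∀ aS bS dS : Subgroup.closure {a, b, d},
        (aS : V3 ⋊[φ] DihedralGroup (2 * g + 2)) = a →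
        (bS : V3 ⋊[φ] DihedralGroup (2 * g + 2)) = b →
        (dS : V3 ⋊[φ] DihedralGroup (2 * g + 2)) = d →
        let π := QuotientGroup.mk' (Subgroup.normalClosure ({dS} : Set (Subgroup.closure {a, b, d})))
        (π aS) ^ (2 * g + 2) = 1 ∧ (π bS) ^ 4 = 1 ∧ (π (aS * bS)) ^ 2 = 1 ∧
          (π bS) ^ 2 * π aS * (π bS) ^ 2 = (π aS) ^ (g + 2)) := by
  intro a b d
  -- basic facts
  have ha : a = inr (r 1) := rfl
  have hapow : ∀ n : ℕ, a ^ n = ⟨1, r (n : ZMod (2*g+2))⟩ := by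
    intro n
    rw [ha, ← map_pow, r_one_pow]
    rfl
  -- the action of r 1
  have hr1 : (r 1 : DihedralGroup (2*g+2)) = sr 0 * sr 1 := by
    rw [sr_mul_sr]; norm_num
  have hφr1 : ∀ v : Fin 3 → ZMod 2, φ (r 1) (Multiplicative.ofAdd v)
      = Multiplicative.ofAdd (M1.mulVec (M2.mulVec v)) := by
    intro v
    rw [hr1, map_mul, MulAut.mul_apply, h2, h1]
  -- r 1 fixes e1+e3
  have hfix1 : φ (r 1) (Multiplicative.ofAdd ![1,0,1]) = Multiplicative.ofAdd ![1,0,1] := by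
    rw [hφr1]
    congr 1
    decide
  have hfix : ∀ n : ℕ, φ (r (n : ZMod (2*g+2))) (Multiplicative.ofAdd ![1,0,1])
      = Multiplicative.ofAdd ![1,0,1] := by
    intro n
    induction n with
    | zero => simp [← one_def]
    | succ k ih =>
      have : (r ((k+1 : ℕ) : ZMod (2*g+2)) : DihedralGroup (2*g+2))
          = r k * r 1 := by rw [r_mul_r]; push_cast; ring_nf
      rw [this, map_mul, MulAut.mul_apply, hfix1, ih]
  -- relation 1
  have rel1 : a ^ (2 * g + 2) = 1 := by
    rw [hapow, ZMod.natCast_self]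
    rfl
  -- b^2
  have hb2 : b ^ 2 = ⟨Multiplicative.ofAdd ![1,1,0], 1⟩ := by
    rw [pow_two]
    show (⟨_ * φ (sr 1) _, sr 1 * sr 1⟩ : V3 ⋊[φ] _) = _
    rw [h2, sr_mul_sr, sub_self, ← one_def]
    congr 1
    show Multiplicative.ofAdd (![0,1,0] + M2.mulVec ![0,1,0]) = _
    congr 1
    decide
  -- relation 2
  have rel2 : b ^ 4 = 1 := by
    have h4 : b ^ 4 = b ^ 2 * b ^ 2 := by rw [← pow_add]
    rw [h4, hb2]
    show (⟨_ * φ 1 _, 1 * 1⟩ : V3 ⋊[φ] _) = 1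
    rw [map_one, mul_one]
    show (⟨Multiplicative.ofAdd (![1,1,0] + ![1,1,0]), 1⟩ : V3 ⋊[φ] _) = 1
    have : (![1,1,0] + ![1,1,0] : Fin 3 → ZMod 2) = 0 := by decide
    rw [this]
    rfl
  -- a*b
  have hab : a * b = ⟨Multiplicative.ofAdd ![1,0,0], sr 0⟩ := by
    show (⟨1 * φ (r 1) _, r 1 * sr 1⟩ : V3 ⋊[φ] _) = _
    rw [one_mul, hφr1, r_mul_sr]
    congr 2
    · decide
    · norm_num
  have rel3 : (a * b) ^ 2 = 1 := by
    rw [pow_two, hab]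
    show (⟨_ * φ (sr 0) _, sr 0 * sr 0⟩ : V3 ⋊[φ] _) = 1
    rw [h1, sr_mul_sr, sub_self, ← one_def]
    show (⟨Multiplicative.ofAdd (![1,0,0] + M1.mulVec ![1,0,0]), 1⟩ : V3 ⋊[φ] _) = 1
    have : (![1,0,0] + M1.mulVec ![1,0,0] : Fin 3 → ZMod 2) = 0 := by decide
    rw [this]
    rfl
  -- relation 4
  have rel4 : b ^ 2 * a * b ^ 2 = a ^ (g + 2) * d := by
    rw [hb2, hapow]
    show (⟨_, _⟩ : V3 ⋊[φ] _) = _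
    show (⟨(Multiplicative.ofAdd ![1,1,0] * φ 1 1) * φ ((1:DihedralGroup (2*g+2)) * r 1) (Multiplicative.ofAdd ![1,1,0]), (1 * r 1) * 1⟩ : V3 ⋊[φ] _)
       = ⟨1 * φ (r ((g+2:ℕ) : ZMod (2*g+2))) (Multiplicative.ofAdd ![1,0,1]), r ((g+2:ℕ) : ZMod (2*g+2)) * r ((g+1:ℕ) : ZMod (2*g+2))⟩
    simp only [map_one, MulAut.one_apply, one_mul, mul_one]
    rw [hfix, hφr1, r_mul_r]
    congr 1
    · show Multiplicative.ofAdd (![1,1,0] + M1.mulVec (M2.mulVec ![1,1,0])) = _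
      congr 1
      decide
    · congr 1
      have h0 : ((2*g+2 : ℕ) : ZMod (2*g+2)) = 0 := ZMod.natCast_self _
      push_cast at h0 ⊢
      linear_combination -h0
  refine ⟨rel1, rel2, rel3, rel4, ?_⟩
  intro aS bS dS haS hbS hdS π
  have hπd : π dS = 1 := by
    rw [QuotientGroup.mk'_apply, QuotientGroup.eq_one_iff]
    exact Subgroup.subset_normalClosure (Set.mem_singleton dS)
  have e1 : aS ^ (2*g+2) = 1 := by
    apply Subtype.ext
    rw [SubmonoidClass.coe_pow, haS, rel1, OneMemClass.coe_one]
  have e2 : bS ^ 4 = 1 := by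
    apply Subtype.ext
    rw [SubmonoidClass.coe_pow, hbS, rel2, OneMemClass.coe_one]
  have e3 : (aS * bS) ^ 2 = 1 := by
    apply Subtype.ext
    rw [SubmonoidClass.coe_pow, MulMemClass.coe_mul, haS, hbS, rel3, OneMemClass.coe_one]
  have e4 : bS ^ 2 * aS * bS ^ 2 = aS ^ (g+2) * dS := by
    apply Subtype.ext
    simp only [MulMemClass.coe_mul, SubmonoidClass.coe_pow, haS, hbS, hdS]
    exact rel4
  refine ⟨?_, ?_, ?_, ?_⟩
  · rw [← map_pow, e1, map_one]
  · rw [← map_pow, e2, map_one]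
  · rw [← map_pow, e3, map_one]
  · rw [← map_pow, ← map_mul, ← map_mul, ← map_pow, e4, map_mul, hπd, mul_one, map_pow]
end

section
/- In the Kulkarni setting with g ≡ 3 (mod 4): there exists φ = (s, v) ∈ D_{2g+2} ⋉ (ℤ/2)³ with s = (r₁r₂)^{±(g+1)/2} and φ² = d = ((r₁r₂)^{g+1}, e₁+e₃) if and only if g ≡ 3 (mod 8). -/
/-- In the Kulkarni setting (`g ≡ 3 (mod 4)`, `G = D_{2g+2} ⋉ (ℤ/2)³` with the action
of the reflections `r₁ = sr 0`, `r₂ = sr 1` given by the matrices `M1`, `M2` over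
`𝔽₂`): there exists `φ' = (s, v) ∈ G` with `s = (r₁r₂)^(±(g+1)/2)` and
`φ'² = d = ((r₁r₂)^(g+1), e₁+e₃)` if and only if `g ≡ 3 (mod 8)`. -/
theorem kulkarni_square_root_iff (g : ℕ) (hg : g % 4 = 3)
    (φ : DihedralGroup (2 * g + 2) →* MulAut V3)
    (h1 : ∀ v : Fin 3 → ZMod 2,
      φ (DihedralGroup.sr 0) (Multiplicative.ofAdd v) = Multiplicative.ofAdd (M1.mulVec v))
    (h2 : ∀ v : Fin 3 → ZMod 2,
      φ (DihedralGroup.sr 1) (Multiplicative.ofAdd v) = Multiplicative.ofAdd (M2.mulVec v)) :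
    let d : V3 ⋊[φ] DihedralGroup (2 * g + 2) :=
      ⟨Multiplicative.ofAdd ![1, 0, 1], DihedralGroup.r ((g + 1 : ℕ) : ZMod (2 * g + 2))⟩
    (∃ x : V3 ⋊[φ] DihedralGroup (2 * g + 2),
        (x.right = DihedralGroup.r (((g + 1) / 2 : ℕ) : ZMod (2 * g + 2)) ∨
          x.right = DihedralGroup.r (-(((g + 1) / 2 : ℕ) : ZMod (2 * g + 2)))) ∧
        x * x = d) ↔ g % 8 = 3 := by
  intro d
  set A : Matrix (Fin 3) (Fin 3) (ZMod 2) := M1 * M2 with hAdef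
  have hr1 : (DihedralGroup.sr 0 : DihedralGroup (2*g+2)) * DihedralGroup.sr 1
      = DihedralGroup.r 1 := by
    rw [DihedralGroup.sr_mul_sr]; norm_num
  have hA : ∀ v : Fin 3 → ZMod 2,
      φ (DihedralGroup.r 1) (Multiplicative.ofAdd v)
        = Multiplicative.ofAdd (A.mulVec v) := by
    intro v
    rw [← hr1, map_mul, MulAut.mul_apply, h2, h1, Matrix.mulVec_mulVec]
  have hkey : ∀ (e : ℕ) (v : Fin 3 → ZMod 2),
      φ (DihedralGroup.r ((e : ℕ) : ZMod (2*g+2))) (Multiplicative.ofAdd v)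
        = Multiplicative.ofAdd ((A ^ e).mulVec v) := by
    intro e
    induction e with
    | zero => intro v; simp [DihedralGroup.one_def.symm, Matrix.one_mulVec]
    | succ k ih =>
      intro v
      have hr : (DihedralGroup.r ((k+1 : ℕ) : ZMod (2*g+2)) : DihedralGroup (2*g+2))
          = DihedralGroup.r ((k : ℕ) : ZMod (2*g+2)) * DihedralGroup.r 1 := by
        rw [DihedralGroup.r_mul_r]; push_cast; ring_nf
      rw [hr, map_mul, MulAut.mul_apply, hA, ih, Matrix.mulVec_mulVec, ← pow_succ]
  have hA4 : A ^ 4 = 1 := by decide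
  constructor
  · rintro ⟨x, hx, hxx⟩
    by_contra hcon
    have h7 : g % 8 = 7 := by omega
    -- x.right = r ↑e with 4 ∣ e
    obtain ⟨e, he4, hre⟩ : ∃ e : ℕ, 4 ∣ e ∧
        x.right = DihedralGroup.r ((e : ℕ) : ZMod (2*g+2)) := by
      rcases hx with hx | hx
      · exact ⟨(g+1)/2, by omega, hx⟩
      · refine ⟨2*g+2 - (g+1)/2, by omega, ?_⟩
        rw [hx]
        congr 1
        have hle : (g+1)/2 ≤ 2*g+2 := by omega
        rw [Nat.cast_sub hle]
        simp
    have hAe : A ^ e = 1 := by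
      obtain ⟨c, rfl⟩ := he4
      rw [pow_mul, hA4, one_pow]
    have hleft := congrArg SemidirectProduct.left hxx
    rw [SemidirectProduct.mul_left, hre] at hleft
    have hx1 : x.left = Multiplicative.ofAdd x.left.toAdd := rfl
    rw [hx1, hkey e, hAe, Matrix.one_mulVec, ← ofAdd_add] at hleft
    have hzero : x.left.toAdd + x.left.toAdd = 0 := by
      funext i
      exact CharTwo.add_self_eq_zero _
    rw [hzero] at hleft
    have : (0 : Fin 3 → ZMod 2) = ![1,0,1] :=
      Multiplicative.ofAdd.injective hleft
    exact absurd (congrFun this 0) (by norm_num)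
  · intro h3
    have hn : (g+1)/2 = 4 * (g/8) + 2 := by omega
    refine ⟨⟨Multiplicative.ofAdd ![1,0,0],
      DihedralGroup.r (((g + 1) / 2 : ℕ) : ZMod (2 * g + 2))⟩, Or.inl rfl, ?_⟩
    have hAn : A ^ ((g+1)/2) = A ^ 2 := by
      rw [hn, pow_add, pow_mul, hA4, one_pow, one_mul]
    apply SemidirectProduct.ext
    · show Multiplicative.ofAdd ![1,0,0] *
        φ (DihedralGroup.r (((g + 1) / 2 : ℕ) : ZMod (2 * g + 2)))
          (Multiplicative.ofAdd ![1,0,0]) = Multiplicative.ofAdd ![1,0,1]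
      rw [hkey, hAn, ← ofAdd_add]
      congr 1
      decide
    · show DihedralGroup.r _ * DihedralGroup.r _ = DihedralGroup.r _
      rw [DihedralGroup.r_mul_r]
      congr 1
      rw [← Nat.cast_add]
      congr 1
      omega
end
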